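/- arXiv:1312.4934 — 5 statements merged into one kernel-verified Lean document; each statement's English description precedes it below -/
import Mathlib

section
/- Let 1 ≤ p < ∞, 0 < α ≤ 1, and let f be analytic on the unit disc with M_p(r, f') = O((1-r)^{α-1}) as r → 1⁻. Then f belongs to H^p and ‖f_r - f‖_{H^p} = O((1-r)^α) as r → 1⁻. -/
open Complex MeasureTheory Real Metric Set Filter Topology Asymptotics
open scoped ENNReal NNReal BoundedContinuousFunction

/-- The p-th integral mean of `f` on the circle of radius `r`. -/
noncomputable def Mp (p : ℝ) (f : ℂ → ℂ) (r : ℝ) : ℝ :=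
  ((1 / (2 * π)) * ∫ θ in (-π)..π, ‖f ((r : ℂ) * Complex.exp ((θ : ℂ) * Complex.I))‖ ^ p) ^ (1 / p)

/-- The Hardy space norm `sup_{0 ≤ r < 1} M_p(r, f)`. -/
noncomputable def hardyNorm (p : ℝ) (f : ℂ → ℂ) : ℝ :=
  ⨆ r : Set.Ico (0 : ℝ) 1, Mp p f r

/-- Membership in the Hardy space `H^p`. -/
def MemHp (p : ℝ) (f : ℂ → ℂ) : Prop :=
  AnalyticOn ℂ f (ball (0 : ℂ) 1) ∧
    BddAbove (Set.range fun r : Set.Ico (0 : ℝ) 1 => Mp p f r)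

/-- The Bergman space norm with respect to normalized area measure on the unit disc. -/
noncomputable def bergmanNorm (p : ℝ) (f : ℂ → ℂ) : ℝ :=
  (π⁻¹ * ∫ z in ball (0 : ℂ) 1, ‖f z‖ ^ p) ^ (1 / p)

/-- The area integral mean `A_p(r, f) = ‖f_r‖_{A^p}`. -/
noncomputable def Ap (p : ℝ) (f : ℂ → ℂ) (r : ℝ) : ℝ :=
  bergmanNorm p (fun z => f ((r : ℂ) * z))

/-- Membership in the Bergman space `A^p`. -/
def MemAp (p : ℝ) (f : ℂ → ℂ) : Prop :=
  AnalyticOn ℂ f (ball (0 : ℂ) 1) ∧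
    IntegrableOn (fun z => ‖f z‖ ^ p) (ball (0 : ℂ) 1) volume

/-- The Dirichlet space norm `(|f(0)|² + ‖f'‖_{A²}²)^{1/2}`. -/
noncomputable def dirichletNorm (f : ℂ → ℂ) : ℝ :=
  Real.sqrt (‖f 0‖ ^ 2 + bergmanNorm 2 (deriv f) ^ 2)

/-- Membership in the Dirichlet space. -/
def MemD (f : ℂ → ℂ) : Prop :=
  AnalyticOn ℂ f (ball (0 : ℂ) 1) ∧ MemAp 2 (deriv f)

noncomputable section Stmt3Aux




def eθ (θ : ℝ) : ℂ := Complex.exp ((θ:ℂ) * Complex.I)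

lemma norm_eθ (θ : ℝ) : ‖eθ θ‖ = 1 := by
  simp [eθ, Complex.norm_exp_ofReal_mul_I]

lemma cont_eθ : Continuous eθ :=
  Complex.continuous_exp.comp (Complex.continuous_ofReal.mul continuous_const)

lemma norm_mul_eθ (t θ : ℝ) : ‖(t:ℂ) * eθ θ‖ = |t| := by
  rw [norm_mul, norm_eθ, mul_one, Complex.norm_real, Real.norm_eq_abs]

lemma mem_closedBall_mul_eθ {t : ℝ} (h0 : 0 ≤ t) (θ : ℝ) :
    (t:ℂ) * eθ θ ∈ closedBall (0:ℂ) t := by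
  rw [mem_closedBall_zero_iff, norm_mul_eθ, _root_.abs_of_nonneg h0]

lemma mem_ball_mul_eθ {t : ℝ} (h0 : 0 ≤ t) (h1 : t < 1) (θ : ℝ) :
    (t:ℂ) * eθ θ ∈ ball (0:ℂ) 1 := by
  rw [mem_ball_zero_iff, norm_mul_eθ, _root_.abs_of_nonneg h0]; exact h1

def curve (g : ℂ → ℂ) (t : ℝ) : ℝ → ℂ := fun θ => g ((t:ℂ) * eθ θ)

lemma curve_cont {g : ℂ → ℂ} (hg : ContinuousOn g (ball (0:ℂ) 1)) {t : ℝ}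
    (h0 : 0 ≤ t) (h1 : t < 1) : Continuous (curve g t) :=
  hg.comp_continuous (continuous_const.mul cont_eθ) (mem_ball_mul_eθ h0 h1)

lemma curve_bdd {g : ℂ → ℂ} (hg : ContinuousOn g (ball (0:ℂ) 1)) {t : ℝ}
    (h0 : 0 ≤ t) (h1 : t < 1) : ∃ C, ∀ θ, ‖curve g t θ‖ ≤ C := by
  obtain ⟨C, hC⟩ := (isCompact_closedBall (0:ℂ) t).exists_bound_of_continuousOn
    (hg.mono (closedBall_subset_ball h1))
  exact ⟨C, fun θ => hC _ (mem_closedBall_mul_eθ h0 θ)⟩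

/-- build a bounded continuous function, with junk value 0 -/
def mybcf (g : ℝ → ℂ) : ℝ →ᵇ ℂ :=
  haveI := Classical.propDecidable (Continuous g ∧ ∃ C, ∀ θ, ‖g θ‖ ≤ C)
  if h : Continuous g ∧ ∃ C, ∀ θ, ‖g θ‖ ≤ C then
    BoundedContinuousFunction.ofNormedAddCommGroup g h.1 h.2.choose h.2.choose_spec
  else 0

lemma mybcf_apply {g : ℝ → ℂ} (h1 : Continuous g) (h2 : ∃ C, ∀ θ, ‖g θ‖ ≤ C) (θ : ℝ) :
    mybcf g θ = g θ := by
  unfold mybcf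
  rw [dif_pos ⟨h1, h2⟩]
  rfl

/-- The measure on the parameter circle. -/
def μπ : Measure ℝ := volume.restrict (Set.Ioc (-π) π)

instance : IsFiniteMeasure μπ :=
  ⟨by rw [μπ, Measure.restrict_apply_univ]; exact measure_Ioc_lt_top⟩

def qq (p : ℝ) : ℝ≥0∞ := ENNReal.ofReal p

lemma qq_toReal {p : ℝ} (hp : 1 ≤ p) : (qq p).toReal = p :=
  ENNReal.toReal_ofReal (by linarith)

lemma qq_ne_zero {p : ℝ} (hp : 1 ≤ p) : qq p ≠ 0 := by
  simp [qq, ENNReal.ofReal_eq_zero]; linarith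

lemma one_le_qq {p : ℝ} (hp : 1 ≤ p) : 1 ≤ qq p := by
  rw [qq, show (1:ℝ≥0∞) = ENNReal.ofReal 1 by simp]
  exact ENNReal.ofReal_le_ofReal hp

/-- Membership in Lp for bounded continuous functions against μπ. -/
lemma memLp_of_bcf {g : ℝ → ℂ} (h1 : Continuous g) (h2 : ∃ C, ∀ θ, ‖g θ‖ ≤ C) (p : ℝ) :
    MemLp g (qq p) μπ :=
  MemLp.of_bound h1.aestronglyMeasurable.restrict h2.choose (ae_of_all _ h2.choose_spec)

/-- `Mp` in terms of `eLpNorm`. -/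
lemma Mp_eq_eLpNorm {p : ℝ} (hp : 1 ≤ p) {g : ℂ → ℂ}
    (hg : ContinuousOn g (ball (0:ℂ) 1)) {t : ℝ} (h0 : 0 ≤ t) (h1 : t < 1) :
    Mp p g t = (1/(2*π))^(1/p) * (eLpNorm (curve g t) (qq p) μπ).toReal := by
  have hmem := memLp_of_bcf (curve_cont hg h0 h1) (curve_bdd hg h0 h1) p
  rw [hmem.eLpNorm_eq_integral_rpow_norm (qq_ne_zero hp) (by simp [qq]),
    ENNReal.toReal_ofReal (by positivity), qq_toReal hp, Mp,
    intervalIntegral.integral_of_le (by linarith [pi_pos] : -π ≤ π),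
    Real.mul_rpow (by positivity) (integral_nonneg fun θ => by positivity)]
  simp [μπ, curve, eθ, one_div]


lemma eLpNorm_mul_eθ (p : ℝ) (h : ℝ → ℂ) :
    eLpNorm (fun θ => eθ θ * h θ) (qq p) μπ = eLpNorm h (qq p) μπ := by
  rw [← eLpNorm_norm (fun θ => eθ θ * h θ), ← eLpNorm_norm h]
  congr 1; funext θ; rw [norm_mul, norm_eθ, one_mul]

variable (f : ℂ → ℂ)

/-- the circle restriction of `f`, as a BCF -/
def Fc (t : ℝ) : ℝ →ᵇ ℂ := mybcf (curve f t)

/-- the derivative integrand, as a BCF -/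
def Gc (t : ℝ) : ℝ →ᵇ ℂ := mybcf (fun θ => eθ θ * curve (deriv f) t θ)

variable {f}

lemma Fc_apply (hf : ContinuousOn f (ball (0:ℂ) 1)) {t : ℝ} (h0 : 0 ≤ t) (h1 : t < 1)
    (θ : ℝ) : Fc f t θ = f ((t:ℂ) * eθ θ) :=
  mybcf_apply (curve_cont hf h0 h1) (curve_bdd hf h0 h1) θ

lemma Gc_props (hf' : ContinuousOn (deriv f) (ball (0:ℂ) 1)) {t : ℝ} (h0 : 0 ≤ t) (h1 : t < 1) :
    Continuous (fun θ => eθ θ * curve (deriv f) t θ) ∧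
      ∃ C, ∀ θ, ‖eθ θ * curve (deriv f) t θ‖ ≤ C := by
  obtain ⟨C, hC⟩ := curve_bdd hf' h0 h1
  exact ⟨cont_eθ.mul (curve_cont hf' h0 h1),
    ⟨C, fun θ => by rw [norm_mul, norm_eθ, one_mul]; exact hC θ⟩⟩

lemma Gc_apply (hf' : ContinuousOn (deriv f) (ball (0:ℂ) 1)) {t : ℝ} (h0 : 0 ≤ t) (h1 : t < 1)
    (θ : ℝ) : Gc f t θ = eθ θ * deriv f ((t:ℂ) * eθ θ) :=
  mybcf_apply (Gc_props hf' h0 h1).1 (Gc_props hf' h0 h1).2 θ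

lemma Gc_contOn (hf' : ContinuousOn (deriv f) (ball (0:ℂ) 1)) {b : ℝ} (hb1 : b < 1) :
    ContinuousOn (Gc f) (Icc 0 b) := by
  rcases lt_or_ge b 0 with hb | hb0
  · rw [Icc_eq_empty (by linarith)]; exact continuousOn_empty _
  rw [Metric.continuousOn_iff]
  intro t ht ε hε
  have hu := (isCompact_closedBall (0:ℂ) b).uniformContinuousOn_of_continuous
    (hf'.mono (closedBall_subset_ball hb1))
  rw [Metric.uniformContinuousOn_iff] at hu
  obtain ⟨δ, hδ, hδ'⟩ := hu (ε/2) (by linarith)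
  refine ⟨δ, hδ, fun s hs hst => ?_⟩
  have key : dist (Gc f s) (Gc f t) ≤ ε/2 := by
    rw [BoundedContinuousFunction.dist_le (by linarith)]
    intro θ
    rw [Gc_apply hf' hs.1 (lt_of_le_of_lt hs.2 hb1), Gc_apply hf' ht.1 (lt_of_le_of_lt ht.2 hb1)]
    have h1 : (s:ℂ) * eθ θ ∈ closedBall (0:ℂ) b :=
      closedBall_subset_closedBall hs.2 (mem_closedBall_mul_eθ hs.1 θ)
    have h2 : (t:ℂ) * eθ θ ∈ closedBall (0:ℂ) b :=
      closedBall_subset_closedBall ht.2 (mem_closedBall_mul_eθ ht.1 θ)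
    have h3 : dist ((s:ℂ) * eθ θ) ((t:ℂ) * eθ θ) < δ := by
      rw [dist_eq_norm, ← sub_mul, ← Complex.ofReal_sub, norm_mul_eθ]
      rwa [Real.dist_eq] at hst
    calc dist (eθ θ * deriv f ((s:ℂ) * eθ θ)) (eθ θ * deriv f ((t:ℂ) * eθ θ))
        = dist (deriv f ((s:ℂ) * eθ θ)) (deriv f ((t:ℂ) * eθ θ)) := by
          rw [dist_eq_norm, dist_eq_norm, ← mul_sub, norm_mul, norm_eθ, one_mul]
      _ ≤ ε/2 := (hδ' _ h1 _ h2 h3).le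
  linarith

lemma Gc_intervalIntegrable (hf' : ContinuousOn (deriv f) (ball (0:ℂ) 1)) {a b : ℝ}
    (ha : 0 ≤ a) (hab : a ≤ b) (hb : b < 1) :
    IntervalIntegrable (Gc f) volume a b := by
  apply ContinuousOn.intervalIntegrable
  apply (Gc_contOn hf' hb).mono
  rw [uIcc_of_le hab]
  exact Icc_subset_Icc ha le_rfl

/-- The fundamental identity: `Fc b - Fc a = ∫ t in a..b, Gc t` in BCF space. -/
lemma Fc_sub_eq_integral (hf : AnalyticOnNhd ℂ f (ball (0:ℂ) 1)) {a b : ℝ}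
    (ha : 0 ≤ a) (hab : a ≤ b) (hb : b < 1) :
    Fc f b - Fc f a = ∫ t in a..b, Gc f t := by
  have hf' : AnalyticOnNhd ℂ (deriv f) (ball (0:ℂ) 1) := hf.deriv
  have hGi := Gc_intervalIntegrable hf'.continuousOn ha hab hb
  ext θ
  have hev := (BoundedContinuousFunction.evalCLM ℂ (β := ℂ) θ).intervalIntegral_comp_comm hGi
  rw [BoundedContinuousFunction.coe_sub, Pi.sub_apply]
  rw [show ((∫ t in a..b, Gc f t) θ) = BoundedContinuousFunction.evalCLM ℂ (β := ℂ) θ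
      (∫ t in a..b, Gc f t) from rfl, ← hev]
  have hcongr : ∀ t ∈ uIcc a b,
      BoundedContinuousFunction.evalCLM ℂ (β := ℂ) θ (Gc f t) = eθ θ * deriv f ((t:ℂ) * eθ θ) := by
    intro t ht
    rw [uIcc_of_le hab] at ht
    exact Gc_apply hf'.continuousOn (ha.trans ht.1) (lt_of_le_of_lt ht.2 hb) θ
  rw [intervalIntegral.integral_congr hcongr]
  have hderiv : ∀ t ∈ uIcc a b,
      HasDerivAt (fun t : ℝ => f ((t:ℂ) * eθ θ)) (eθ θ * deriv f ((t:ℂ) * eθ θ)) t := by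
    intro t ht
    rw [uIcc_of_le hab] at ht
    have hz : (t:ℂ) * eθ θ ∈ ball (0:ℂ) 1 :=
      mem_ball_mul_eθ (ha.trans ht.1) (lt_of_le_of_lt ht.2 hb) θ
    have h1 : HasDerivAt f (deriv f ((t:ℂ) * eθ θ)) ((t:ℂ) * eθ θ) :=
      ((hf _ hz).differentiableAt).hasDerivAt
    have h2 : HasDerivAt (fun z : ℂ => f (z * eθ θ))
        (deriv f ((t:ℂ) * eθ θ) * eθ θ) (t:ℂ) := by
      exact HasDerivAt.comp (t:ℂ) (by simpa using h1) (hasDerivAt_mul_const (eθ θ))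
    have h3 := h2.comp_ofReal
    rw [mul_comm] at h3
    exact h3
  have hint : IntervalIntegrable (fun t : ℝ => eθ θ * deriv f ((t:ℂ) * eθ θ)) volume a b := by
    apply ContinuousOn.intervalIntegrable
    rw [uIcc_of_le hab]
    refine continuousOn_const.mul (hf'.continuousOn.comp
      ((Complex.continuous_ofReal.mul continuous_const).continuousOn) (fun t ht => ?_))
    exact mem_ball_mul_eθ (ha.trans ht.1) (lt_of_le_of_lt ht.2 hb) θ
  rw [intervalIntegral.integral_eq_sub_of_hasDerivAt hderiv hint]
  rw [Fc_apply hf.continuousOn (ha.trans hab) hb, Fc_apply hf.continuousOn ha (lt_of_le_of_lt hab hb)]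


lemma mybcf_coe {g : ℝ → ℂ} (h1 : Continuous g) (h2 : ∃ C, ∀ θ, ‖g θ‖ ≤ C) :
    ⇑(mybcf g) = g := funext (mybcf_apply h1 h2)

section LpStuff

variable (p : ℝ) [Fact (1 ≤ qq p)]

def TL : (ℝ →ᵇ ℂ) →L[ℂ] Lp ℂ (qq p) μπ := BoundedContinuousFunction.toLp (qq p) μπ ℂ

lemma norm_TL (g : ℝ →ᵇ ℂ) : ‖TL p g‖ = (eLpNorm (⇑g) (qq p) μπ).toReal := by
  rw [TL, MeasureTheory.Lp.norm_def,
    eLpNorm_congr_ae (BoundedContinuousFunction.coeFn_toLp (p := qq p) (μ := μπ) (𝕜 := ℂ) g)]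

variable (f : ℂ → ℂ)

/-- The radial majorant function. -/
def φf (t : ℝ) : ℝ := (1/(2*π))^(1/p) * ‖TL p (Gc f t)‖

variable {p f}

lemma φf_eq (hp : 1 ≤ p) (hf' : ContinuousOn (deriv f) (ball (0:ℂ) 1)) {t : ℝ}
    (h0 : 0 ≤ t) (h1 : t < 1) : φf p f t = Mp p (deriv f) t := by
  rw [Mp_eq_eLpNorm hp hf' h0 h1, φf, norm_TL, Gc,
    mybcf_coe (Gc_props hf' h0 h1).1 (Gc_props hf' h0 h1).2, eLpNorm_mul_eθ]

lemma φf_nonneg (t : ℝ) : 0 ≤ φf p f t := by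
  apply mul_nonneg _ (norm_nonneg _); positivity

lemma φf_contOn (hf' : ContinuousOn (deriv f) (ball (0:ℂ) 1)) {b : ℝ} (hb : b < 1) :
    ContinuousOn (φf p f) (Icc 0 b) :=
  continuousOn_const.mul ((TL p).continuous.comp_continuousOn (Gc_contOn hf' hb)).norm

lemma key_ineq (hp : 1 ≤ p) (hf : AnalyticOnNhd ℂ f (ball (0:ℂ) 1)) {a b : ℝ}
    (ha : 0 ≤ a) (hab : a ≤ b) (hb : b < 1) :
    (1/(2*π))^(1/p) *
        (eLpNorm (fun θ => f ((b:ℂ) * eθ θ) - f ((a:ℂ) * eθ θ)) (qq p) μπ).toReal ≤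
      ∫ t in a..b, φf p f t := by
  have hf' : AnalyticOnNhd ℂ (deriv f) (ball (0:ℂ) 1) := hf.deriv
  have hGi := Gc_intervalIntegrable hf'.continuousOn ha hab hb
  have hcoe : (fun θ => f ((b:ℂ) * eθ θ) - f ((a:ℂ) * eθ θ)) = ⇑(Fc f b - Fc f a) := by
    funext θ
    rw [BoundedContinuousFunction.coe_sub, Pi.sub_apply,
      Fc_apply hf.continuousOn (ha.trans hab) hb,
      Fc_apply hf.continuousOn ha (lt_of_le_of_lt hab hb)]
  rw [hcoe, ← norm_TL, Fc_sub_eq_integral hf ha hab hb,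
    ← (TL p).intervalIntegral_comp_comm hGi]
  simp only [φf]
  calc (1/(2*π))^(1/p) * ‖∫ t in a..b, TL p (Gc f t)‖
      ≤ (1/(2*π))^(1/p) * ∫ t in a..b, ‖TL p (Gc f t)‖ := by
        apply mul_le_mul_of_nonneg_left
          (intervalIntegral.norm_integral_le_integral_norm hab) (by positivity)
    _ = ∫ t in a..b, (1/(2*π))^(1/p) * ‖TL p (Gc f t)‖ := by
        rw [intervalIntegral.integral_const_mul]

lemma Mp_diff_eq (hp : 1 ≤ p) (hfc : ContinuousOn f (ball (0:ℂ) 1)) {r s : ℝ}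
    (hr0 : 0 ≤ r) (hr1 : r ≤ 1) (hs0 : 0 ≤ s) (hs1 : s < 1) :
    Mp p (fun z => f ((r:ℂ) * z) - f z) s =
      (1/(2*π))^(1/p) *
        (eLpNorm (fun θ => f (((r*s : ℝ):ℂ) * eθ θ) - f ((s:ℂ) * eθ θ)) (qq p) μπ).toReal := by
  have hg : ContinuousOn (fun z => f ((r:ℂ) * z) - f z) (ball (0:ℂ) 1) := by
    refine ContinuousOn.sub (hfc.comp (continuous_const.mul continuous_id).continuousOn
      (fun z hz => ?_)) hfc
    rw [mem_ball_zero_iff] at hz ⊢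
    calc ‖(r:ℂ) * z‖ = |r| * ‖z‖ := by
          rw [norm_mul, Complex.norm_real, Real.norm_eq_abs]
      _ ≤ 1 * ‖z‖ := by
          apply mul_le_mul_of_nonneg_right _ (norm_nonneg _)
          rw [_root_.abs_of_nonneg hr0]; exact hr1
      _ < 1 := by rwa [one_mul]
  have hcv : curve (fun z => f ((r:ℂ) * z) - f z) s =
      fun θ => f (((r*s : ℝ):ℂ) * eθ θ) - f ((s:ℂ) * eθ θ) := by
    funext θ
    show f ((r:ℂ) * ((s:ℂ) * eθ θ)) - f ((s:ℂ) * eθ θ) = _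
    push_cast
    ring_nf
  rw [Mp_eq_eLpNorm hp hg hs0 hs1, hcv]

end LpStuff


lemma Mp_nonneg (p : ℝ) (g : ℂ → ℂ) (r : ℝ) : 0 ≤ Mp p g r := by
  apply Real.rpow_nonneg
  apply mul_nonneg (by positivity)
  exact intervalIntegral.integral_nonneg (by linarith [pi_pos]) (fun θ _ => by positivity)

lemma intervalIntegrable_one_sub_rpow {β a b : ℝ} (hab : a ≤ b) (hb : b < 1) :
    IntervalIntegrable (fun t => (1-t)^(β-1)) volume a b := by
  apply ContinuousOn.intervalIntegrable
  rw [uIcc_of_le hab]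
  apply ContinuousOn.rpow_const ((continuous_const.sub continuous_id).continuousOn)
  intro t ht
  refine Or.inl ?_
  simp only [Pi.sub_apply, id_eq]
  have := ht.2
  intro h
  have : (1:ℝ) - t > 0 := by linarith
  linarith [h ▸ this]

lemma integral_one_sub_rpow {β a b : ℝ} (hβ : 0 < β) (hab : a ≤ b) (hb : b < 1) :
    ∫ t in a..b, (1-t)^(β-1) = ((1-a)^β - (1-b)^β)/β := by
  have h := intervalIntegral.integral_comp_sub_left (a := a) (b := b) (fun u => u^(β-1)) 1
  rw [h, integral_rpow (Or.inl (by linarith))]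
  rw [sub_add_cancel]

lemma psi_integral {β C₁ C a b : ℝ} (hβ : 0 < β) (hab : a ≤ b) (hb : b < 1) :
    ∫ t in a..b, (C₁ + C * (1-t)^(β-1)) =
      C₁*(b-a) + C * (((1-a)^β - (1-b)^β)/β) := by
  rw [intervalIntegral.integral_add intervalIntegrable_const
    ((intervalIntegrable_one_sub_rpow hab hb).const_mul C),
    intervalIntegral.integral_const, intervalIntegral.integral_const_mul,
    integral_one_sub_rpow hβ hab hb, smul_eq_mul, mul_comm]

lemma rpow_sub_le {β x y : ℝ} (hβ0 : 0 ≤ β) (hβ1 : β ≤ 1) (hx : 0 ≤ x) (hy : 0 ≤ y) :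
    (x + y)^β - x^β ≤ y^β := by
  have h := NNReal.rpow_add_le_add_rpow x.toNNReal y.toNNReal hβ0 hβ1
  have h2 := NNReal.coe_le_coe.2 h
  push_cast at h2
  rw [Real.coe_toNNReal x hx, Real.coe_toNNReal y hy] at h2
  linarith

lemma Mp_eq_norm_TL {p : ℝ} [Fact (1 ≤ qq p)] (hp : 1 ≤ p) {g : ℂ → ℂ}
    (hg : ContinuousOn g (ball (0:ℂ) 1)) {t : ℝ} (h0 : 0 ≤ t) (h1 : t < 1) :
    Mp p g t = (1/(2*π))^(1/p) * ‖TL p (Fc g t)‖ := by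
  rw [Mp_eq_eLpNorm hp hg h0 h1, norm_TL, Fc,
    mybcf_coe (curve_cont hg h0 h1) (curve_bdd hg h0 h1)]

lemma norm_TL_Fc_sub {p : ℝ} [Fact (1 ≤ qq p)] {f : ℂ → ℂ}
    (hfc : ContinuousOn f (ball (0:ℂ) 1)) {a b : ℝ} (ha : 0 ≤ a) (hab : a ≤ b) (hb : b < 1) :
    ‖TL p (Fc f b - Fc f a)‖ =
      (eLpNorm (fun θ => f ((b:ℂ) * eθ θ) - f ((a:ℂ) * eθ θ)) (qq p) μπ).toReal := by
  have hcoe : ⇑(Fc f b - Fc f a) = fun θ => f ((b:ℂ) * eθ θ) - f ((a:ℂ) * eθ θ) := by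
    funext θ
    rw [BoundedContinuousFunction.coe_sub, Pi.sub_apply,
      Fc_apply hfc (ha.trans hab) hb, Fc_apply hfc ha (lt_of_le_of_lt hab hb)]
  rw [norm_TL, hcoe]

lemma norm_TL_Fc_sub' {p : ℝ} [Fact (1 ≤ qq p)] {f : ℂ → ℂ}
    (hfc : ContinuousOn f (ball (0:ℂ) 1)) {a b : ℝ} (ha : 0 ≤ a) (hab : a ≤ b) (hb : b < 1) :
    ‖TL p (Fc f b - Fc f a)‖ =
      (eLpNorm (fun θ => f ((a:ℂ) * eθ θ) - f ((b:ℂ) * eθ θ)) (qq p) μπ).toReal := by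
  rw [norm_TL_Fc_sub hfc ha hab hb]
  congr 1
  rw [← eLpNorm_norm (fun θ => f ((b:ℂ) * eθ θ) - f ((a:ℂ) * eθ θ)),
    ← eLpNorm_norm (fun θ => f ((a:ℂ) * eθ θ) - f ((b:ℂ) * eθ θ))]
  congr 1
  funext θ
  rw [norm_sub_rev]

end Stmt3Aux

theorem stmt3 (p α : ℝ) (hp : 1 ≤ p) (hα : 0 < α) (hα1 : α ≤ 1) (f : ℂ → ℂ)
    (hf : AnalyticOn ℂ f (ball (0 : ℂ) 1))
    (hO : (fun r : ℝ => Mp p (deriv f) r) =O[𝓝[<] (1 : ℝ)] (fun r => (1 - r) ^ (α - 1))) :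
    MemHp p f ∧
      (fun r : ℝ => hardyNorm p (fun z => f ((r : ℂ) * z) - f z))
        =O[𝓝[<] (1 : ℝ)] (fun r => (1 - r) ^ α) := by
  have hp0 : 0 < p := lt_of_lt_of_le one_pos hp
  haveI : Fact (1 ≤ qq p) := ⟨one_le_qq hp⟩
  haveI : Nonempty (Set.Ico (0:ℝ) 1) := ⟨⟨0, by constructor <;> norm_num⟩⟩
  have hfN : AnalyticOnNhd ℂ f (ball (0:ℂ) 1) := (isOpen_ball.analyticOn_iff_analyticOnNhd).mp hf
  have hfc : ContinuousOn f (ball (0:ℂ) 1) := hf.continuousOn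
  have hf' : ContinuousOn (deriv f) (ball (0:ℂ) 1) := hfN.deriv.continuousOn
  rw [isBigO_iff] at hO
  obtain ⟨C0, hC0⟩ := hO
  rw [Filter.eventually_iff] at hC0
  obtain ⟨r₀', hr₀'1, hsub⟩ :=
    (mem_nhdsLT_iff_exists_Ioo_subset' (show (0:ℝ) < 1 by norm_num)).mp hC0
  set r₀ : ℝ := max r₀' 0 with hr₀def
  have hr₀0 : 0 ≤ r₀ := le_max_right _ _
  have hr₀1 : r₀ < 1 := max_lt hr₀'1 one_pos
  set C : ℝ := max C0 0 with hCdef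
  have hC : 0 ≤ C := le_max_right _ _
  obtain ⟨C₁0, hC₁0⟩ := (isCompact_Icc (a := (0:ℝ)) (b := r₀)).exists_bound_of_continuousOn
    (φf_contOn (p := p) hf' hr₀1)
  set C₁ : ℝ := max C₁0 0 with hC₁def
  have hC₁ : 0 ≤ C₁ := le_max_right _ _
  -- pointwise majorant for the radial function
  have hψ : ∀ t ∈ Ico (0:ℝ) 1, φf p f t ≤ C₁ + C * (1-t)^(α-1) := by
    intro t ht
    have h1t : (0:ℝ) ≤ 1 - t := by linarith [ht.2]
    have hpow : (0:ℝ) ≤ (1-t)^(α-1) := Real.rpow_nonneg h1t _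
    have h3 : 0 ≤ C * (1-t)^(α-1) := mul_nonneg hC hpow
    rcases le_or_gt t r₀ with h | h
    · have h1 := hC₁0 t ⟨ht.1, h⟩
      rw [Real.norm_eq_abs] at h1
      have h2 : φf p f t ≤ |φf p f t| := le_abs_self _
      have h4 : |φf p f t| ≤ C₁ := le_trans h1 (le_max_left _ _)
      linarith
    · have hmem : t ∈ Ioo r₀' 1 := ⟨lt_of_le_of_lt (le_max_left _ _) h, ht.2⟩
      have h4 := hsub hmem
      simp only [mem_setOf_eq] at h4
      rw [Real.norm_eq_abs, Real.norm_eq_abs, _root_.abs_of_nonneg hpow] at h4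
      rw [φf_eq hp hf' ht.1 ht.2]
      have h5 : Mp p (deriv f) t ≤ C0 * (1-t)^(α-1) := le_trans (le_abs_self _) h4
      have h6 : C0 * (1-t)^(α-1) ≤ C * (1-t)^(α-1) :=
        mul_le_mul_of_nonneg_right (le_max_left _ _) hpow
      linarith
  -- integral bound
  have hIB : ∀ a b : ℝ, 0 ≤ a → a ≤ b → b < 1 →
      ∫ t in a..b, φf p f t ≤ C₁*(b-a) + C * (((1-a)^α - (1-b)^α)/α) := by
    intro a b ha hab hb
    have hφi : IntervalIntegrable (φf p f) volume a b := by
      apply ContinuousOn.intervalIntegrable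
      apply (φf_contOn hf' hb).mono
      rw [uIcc_of_le hab]
      exact Icc_subset_Icc ha le_rfl
    have hψi : IntervalIntegrable (fun t => C₁ + C * (1-t)^(α-1)) volume a b :=
      intervalIntegrable_const.add ((intervalIntegrable_one_sub_rpow hab hb).const_mul C)
    have hmono := intervalIntegral.integral_mono_on hab hφi hψi
      (fun t ht => hψ t ⟨ha.trans ht.1, lt_of_le_of_lt ht.2 hb⟩)
    rwa [psi_integral hα hab hb] at hmono
  -- key estimate
  have hKey : ∀ a b : ℝ, 0 ≤ a → a ≤ b → b < 1 →
      (1/(2*π))^(1/p) * ‖TL p (Fc f b - Fc f a)‖ ≤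
        C₁*(b-a) + C * (((1-a)^α - (1-b)^α)/α) := by
    intro a b ha hab hb
    refine le_trans ?_ (hIB a b ha hab hb)
    rw [norm_TL_Fc_sub hfc ha hab hb]
    exact key_ineq hp hfN ha hab hb
  constructor
  · refine ⟨hf, ⟨Mp p f 0 + (C₁ + C * (1/α)), ?_⟩⟩
    rintro x ⟨⟨r, hr0, hr1⟩, rfl⟩
    simp only
    have e1 : Mp p f r = (1/(2*π))^(1/p) * ‖TL p (Fc f r)‖ := Mp_eq_norm_TL hp hfc hr0 hr1
    have e0 : Mp p f 0 = (1/(2*π))^(1/p) * ‖TL p (Fc f 0)‖ := Mp_eq_norm_TL hp hfc le_rfl one_pos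
    have tri : ‖TL p (Fc f r)‖ - ‖TL p (Fc f 0)‖ ≤ ‖TL p (Fc f r) - TL p (Fc f 0)‖ :=
      norm_sub_norm_le _ _
    have hmap : TL p (Fc f r) - TL p (Fc f 0) = TL p (Fc f r - Fc f 0) :=
      (map_sub (TL p) _ _).symm
    have hk := hKey 0 r le_rfl hr0 hr1
    have hc : (0:ℝ) ≤ (1/(2*π))^(1/p) := by positivity
    have tri2 : ‖TL p (Fc f r)‖ ≤ ‖TL p (Fc f 0)‖ + ‖TL p (Fc f r - Fc f 0)‖ := by
      rw [← hmap]; linarith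
    have h8 := mul_le_mul_of_nonneg_left tri2 hc
    rw [mul_add] at h8
    have h9 : C₁*(r-0) + C * (((1-0:ℝ)^α - (1-r)^α)/α) ≤ C₁ + C * (1/α) := by
      have hpow0 : (0:ℝ) ≤ (1-r)^α := Real.rpow_nonneg (by linarith) _
      have h10 : ((1:ℝ)-0)^α = 1 := by rw [sub_zero, Real.one_rpow]
      rw [h10]
      have h11 : (1 - (1-r)^α)/α ≤ 1/α := (div_le_div_iff_of_pos_right hα).mpr (by linarith)
      have h12 : C * ((1 - (1-r)^α)/α) ≤ C * (1/α) := mul_le_mul_of_nonneg_left h11 hC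
      have h13 : C₁*(r-0) ≤ C₁ := by
        rw [sub_zero]
        calc C₁ * r ≤ C₁ * 1 := mul_le_mul_of_nonneg_left hr1.le hC₁
          _ = C₁ := mul_one _
      linarith
    linarith
  · rw [isBigO_iff]
    refine ⟨C₁ + C * (1/α), ?_⟩
    filter_upwards [Ioo_mem_nhdsLT (show (0:ℝ) < 1 by norm_num)] with r hr
    have hr0 : (0:ℝ) ≤ r := hr.1.le
    have hr1 : r < 1 := hr.2
    have h1r : (0:ℝ) < 1 - r := by linarith
    have hra : (0:ℝ) ≤ (1-r)^α := Real.rpow_nonneg h1r.le _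
    have hbound : ∀ s : Set.Ico (0:ℝ) 1,
        Mp p (fun z => f ((r:ℂ)*z) - f z) ↑s ≤ (C₁ + C * (1/α)) * (1-r)^α := by
      rintro ⟨s, hs0, hs1⟩
      simp only
      have hrs0 : (0:ℝ) ≤ r*s := mul_nonneg hr0 hs0
      have hrs : r*s ≤ s := mul_le_of_le_one_left hs0 hr1.le
      rw [Mp_diff_eq hp hfc hr0 hr1.le hs0 hs1, ← norm_TL_Fc_sub' hfc hrs0 hrs hs1]
      refine le_trans (hKey (r*s) s hrs0 hrs hs1) ?_
      have key1 : s - r*s ≤ (1-r)^α := by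
        have h2 : s*(1-r) ≤ 1-r := by nlinarith
        have h3 : (1-r) ≤ (1-r)^α := by
          have h := Real.rpow_le_rpow_of_exponent_ge h1r (by linarith) hα1
          rwa [Real.rpow_one] at h
        nlinarith
      have key2 : (1-r*s)^α - (1-s)^α ≤ (1-r)^α := by
        have e : 1 - r*s = (1-s) + s*(1-r) := by ring
        have h4 := rpow_sub_le hα.le hα1 (by linarith : (0:ℝ) ≤ 1-s)
          (by nlinarith : (0:ℝ) ≤ s*(1-r))
        rw [← e] at h4
        have h5 : (s*(1-r))^α ≤ (1-r)^α :=
          Real.rpow_le_rpow (by nlinarith) (by nlinarith) hα.le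
        linarith
      have hd : ((1-r*s)^α - (1-s)^α)/α ≤ ((1-r)^α)/α := (div_le_div_iff_of_pos_right hα).mpr key2
      have h6 := mul_le_mul_of_nonneg_left key1 hC₁
      have h7 := mul_le_mul_of_nonneg_left hd hC
      calc C₁*(s - r*s) + C * (((1-r*s)^α - (1-s)^α)/α)
          ≤ C₁*(1-r)^α + C * ((1-r)^α/α) := by linarith
        _ = (C₁ + C * (1/α)) * (1-r)^α := by ring
    have hnn : 0 ≤ hardyNorm p (fun z => f ((r:ℂ)*z) - f z) :=
      Real.iSup_nonneg (fun s => Mp_nonneg _ _ _)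
    have hle : hardyNorm p (fun z => f ((r:ℂ)*z) - f z) ≤ (C₁ + C * (1/α)) * (1-r)^α :=
      ciSup_le hbound
    rw [Real.norm_eq_abs, Real.norm_eq_abs, _root_.abs_of_nonneg hnn, _root_.abs_of_nonneg hra]
    exact hle
end

section
/- Let 1 ≤ p < ∞ and 0 < α ≤ 1. If f is analytic on the unit disc and the Bergman area mean of its derivative satisfies A_p(r, f') ≤ C(1-r)^{α-1} for all 0 < r < 1, then f belongs to the Bergman space A^p, with ‖f - f(0)‖_{A^p} ≤ C/α. -/
open Complex MeasureTheory Real Metric Set Filter Topology Asymptotics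
open scoped ENNReal NNReal

/-! ### Auxiliary lemmas -/

section Aux

theorem stmt11_lp_integrable_on {X : Type*} [MeasurableSpace X] {μ : Measure X}
    [IsFiniteMeasure μ] {q : ℝ≥0∞} [hq : Fact (1 ≤ q)]
    (u : Lp ℂ q μ) (s : Set X) : IntegrableOn (⇑u) s μ := by
  have h1 : MemLp (⇑u) 1 μ := (Lp.memLp u).mono_exponent hq.out
  exact (memLp_one_iff_integrable.mp h1).integrableOn

theorem stmt11_exp_nonneg {q : ℝ≥0∞} (hq : 1 ≤ q) : 0 ≤ 1 - 1 / q.toReal := by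
  rcases eq_or_ne q ∞ with h | h
  · simp [h]
  · have h1 : 1 ≤ q.toReal := by simpa using ENNReal.toReal_mono h hq
    have : 1 / q.toReal ≤ 1 := by rw [div_le_one (by linarith)]; linarith
    linarith

/-- The continuous linear functional `u ↦ ∫_s u dμ` on `Lp`. -/
noncomputable def setIntCLM {X : Type*} [MeasurableSpace X] (μ : Measure X) [IsFiniteMeasure μ]
    (q : ℝ≥0∞) [hq : Fact (1 ≤ q)] (s : Set X) : Lp ℂ q μ →L[ℂ] ℂ :=
  LinearMap.mkContinuous
    { toFun := fun u => ∫ x in s, u x ∂μ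
      map_add' := fun u v => by
        have h : ∀ᵐ x ∂μ.restrict s, (⇑(u + v)) x = u x + v x :=
          ae_restrict_of_ae (Lp.coeFn_add u v)
        show ∫ x in s, (⇑(u + v)) x ∂μ = _
        rw [integral_congr_ae h,
          integral_add (stmt11_lp_integrable_on u s) (stmt11_lp_integrable_on v s)]
      map_smul' := fun c u => by
        have h : ∀ᵐ x ∂μ.restrict s, (⇑(c • u)) x = c • u x :=
          ae_restrict_of_ae (Lp.coeFn_smul c u)
        show ∫ x in s, (⇑(c • u)) x ∂μ = _
        rw [integral_congr_ae h, integral_smul]; rfl }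
    ((μ Set.univ ^ (1 - 1 / q.toReal)).toReal)
    (by
      intro u
      simp only [LinearMap.coe_mk, AddHom.coe_mk]
      calc ‖∫ x in s, u x ∂μ‖ ≤ ∫ x in s, ‖u x‖ ∂μ := norm_integral_le_integral_norm _
        _ ≤ ∫ x, ‖u x‖ ∂μ := by
            apply setIntegral_le_integral ((Lp.memLp u).mono_exponent hq.out
              |>.integrable le_rfl).norm
            filter_upwards with x using norm_nonneg _
        _ = (eLpNorm (⇑u) 1 μ).toReal := by
            rw [eLpNorm_one_eq_lintegral_enorm,
              integral_norm_eq_lintegral_enorm (Lp.aestronglyMeasurable u)]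
        _ ≤ ((eLpNorm (⇑u) q μ * μ Set.univ ^ (1 - 1 / q.toReal))).toReal := by
            apply ENNReal.toReal_mono
            · exact ENNReal.mul_ne_top (Lp.eLpNorm_ne_top u)
                (ENNReal.rpow_ne_top_of_nonneg (stmt11_exp_nonneg hq.out) (measure_ne_top μ _))
            · simpa using
                eLpNorm_le_eLpNorm_mul_rpow_measure_univ hq.out (Lp.aestronglyMeasurable u)
        _ = (μ Set.univ ^ (1 - 1 / q.toReal)).toReal * ‖u‖ := by
            rw [ENNReal.toReal_mul, ← Lp.norm_def, mul_comm])

theorem setIntCLM_apply {X : Type*} [MeasurableSpace X] (μ : Measure X) [IsFiniteMeasure μ]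
    (q : ℝ≥0∞) [hq : Fact (1 ≤ q)] (s : Set X) (u : Lp ℂ q μ) :
    setIntCLM μ q s u = ∫ x in s, u x ∂μ := rfl

theorem stmt11_mem_ball {t : ℝ} (ht0 : -1 ≤ t) (ht1 : t ≤ 1) {z : ℂ} (hz : z ∈ ball (0 : ℂ) 1) :
    (t : ℂ) * z ∈ ball (0 : ℂ) 1 := by
  simp only [mem_ball, dist_zero_right] at hz ⊢
  calc ‖(t : ℂ) * z‖ = |t| * ‖z‖ := by rw [norm_mul, Complex.norm_real, Real.norm_eq_abs]
    _ ≤ 1 * ‖z‖ := mul_le_mul_of_nonneg_right (abs_le.mpr ⟨ht0, ht1⟩) (norm_nonneg z)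
    _ < 1 := by rwa [one_mul]

/-- Fundamental theorem of calculus along the segment from `0` to `z`. -/
theorem stmt11_ftc (f : ℂ → ℂ) (hfn : AnalyticOnNhd ℂ f (ball (0 : ℂ) 1))
    {z : ℂ} (hz : z ∈ ball (0 : ℂ) 1) :
    f z - f 0 = ∫ t in Set.Ioo (0 : ℝ) 1, (z * deriv f ((t : ℂ) * z)) := by
  have hdc : ContinuousOn (deriv f) (ball (0 : ℂ) 1) := (hfn.deriv).continuousOn
  have hmem : ∀ t : ℝ, t ∈ Set.uIcc (0 : ℝ) 1 → (t : ℂ) * z ∈ ball (0 : ℂ) 1 := by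
    intro t ht
    rw [Set.uIcc_of_le zero_le_one] at ht
    exact stmt11_mem_ball (by linarith [ht.1]) ht.2 hz
  have hderiv : ∀ t ∈ Set.uIcc (0 : ℝ) 1,
      HasDerivAt (fun s : ℝ => f ((s : ℂ) * z)) (z * deriv f ((t : ℂ) * z)) t := by
    intro t ht
    have hdf : HasDerivAt f (deriv f ((t : ℂ) * z)) ((t : ℂ) * z) :=
      ((hfn _ (hmem t ht)).differentiableAt).hasDerivAt
    have hinner : HasDerivAt (fun w : ℂ => w * z) z ((t : ℂ)) := by
      simpa using (hasDerivAt_id ((t : ℂ))).mul_const z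
    have h := (hdf.comp ((t : ℂ)) hinner).comp_ofReal
    simpa [Function.comp, mul_comm] using h
  have hcont : ContinuousOn (fun t : ℝ => z * deriv f ((t : ℂ) * z)) (Set.uIcc (0 : ℝ) 1) := by
    apply ContinuousOn.mul continuousOn_const
    apply hdc.comp ((Complex.continuous_ofReal.mul continuous_const).continuousOn)
    intro t ht
    exact hmem t ht
  have h := intervalIntegral.integral_eq_sub_of_hasDerivAt hderiv hcont.intervalIntegrable
  rw [intervalIntegral.integral_of_le zero_le_one, MeasureTheory.integral_Ioc_eq_integral_Ioo] at h
  rw [h]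
  norm_num

theorem stmt11_memlp (q : ℝ≥0∞) (F : ℂ → ℂ) (hFc : ContinuousOn F (ball (0 : ℂ) 1))
    (M : ℝ) (hM : ∀ z ∈ ball (0 : ℂ) 1, ‖F z‖ ≤ M) :
    MemLp F q (volume.restrict (ball (0 : ℂ) 1)) := by
  haveI : IsFiniteMeasure (volume.restrict (ball (0 : ℂ) 1)) :=
    ⟨by rw [Measure.restrict_apply_univ]; exact measure_ball_lt_top⟩
  apply MemLp.of_bound (hFc.aestronglyMeasurable measurableSet_ball) M
  filter_upwards [ae_restrict_mem measurableSet_ball] with z hz using hM z hz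

theorem stmt11_bound (f : ℂ → ℂ) (hdc : ContinuousOn (deriv f) (ball (0 : ℂ) 1))
    {t : ℝ} (ht0 : 0 ≤ t) (ht1 : t < 1) :
    ∃ M, 0 ≤ M ∧ ∀ z ∈ ball (0 : ℂ) 1, ‖deriv f ((t : ℂ) * z)‖ ≤ M := by
  have hsub : closedBall (0 : ℂ) t ⊆ ball (0 : ℂ) 1 := closedBall_subset_ball ht1
  obtain ⟨M, hM⟩ := (isCompact_closedBall (0 : ℂ) t).exists_bound_of_continuousOn (hdc.mono hsub)
  refine ⟨M, le_trans (norm_nonneg _) (hM 0 (mem_closedBall_self ht0)), fun z hz => ?_⟩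
  apply hM
  simp only [mem_ball, dist_zero_right] at hz
  simp only [mem_closedBall, dist_zero_right]
  calc ‖(t : ℂ) * z‖ = t * ‖z‖ := by rw [norm_mul, Complex.norm_real, Real.norm_eq_abs, _root_.abs_of_nonneg ht0]
    _ ≤ t * 1 := mul_le_mul_of_nonneg_left hz.le ht0
    _ = t := mul_one t

theorem stmt11_hIoo {α : ℝ} (hα : 0 < α) :
    ∫ t in Set.Ioo (0 : ℝ) 1, (1 - t) ^ (α - 1) = α⁻¹ := by
  rw [← MeasureTheory.integral_Ioc_eq_integral_Ioo, ← intervalIntegral.integral_of_le zero_le_one]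
  rw [intervalIntegral.integral_comp_sub_left (fun s : ℝ => s ^ (α - 1)) 1]
  norm_num
  rw [integral_rpow (Or.inl (by linarith))]
  rw [Real.zero_rpow (by linarith : α - 1 + 1 ≠ 0)]
  rw [Real.one_rpow]
  field_simp
  simp [hα.ne']

theorem stmt11_hbase_int {α : ℝ} (hα : 0 < α) :
    IntegrableOn (fun t : ℝ => (1 - t) ^ (α - 1)) (Set.Ioo (0 : ℝ) 1) volume := by
  have h1 : IntervalIntegrable (fun s : ℝ => s ^ (α - 1)) volume 0 1 :=
    intervalIntegral.intervalIntegrable_rpow' (by linarith)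
  have h2 : IntervalIntegrable (fun t : ℝ => (1 - t) ^ (α - 1)) volume 0 1 := by
    have h := h1.comp_sub_left 1
    simpa using h.symm
  exact ((intervalIntegrable_iff_integrableOn_Ioc_of_le zero_le_one).mp h2).mono_set
    Set.Ioo_subset_Ioc_self

end Aux

theorem stmt11 (p α : ℝ) (hp : 1 ≤ p) (hα : 0 < α) (hα1 : α ≤ 1) (f : ℂ → ℂ)
    (hf : AnalyticOn ℂ f (ball (0 : ℂ) 1)) (C : ℝ)
    (hC : ∀ r ∈ Ioo (0 : ℝ) 1, Ap p (deriv f) r ≤ C * (1 - r) ^ (α - 1)) :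
    MemAp p f ∧ bergmanNorm p (fun z => f z - f 0) ≤ C / α := by
  have hp0 : 0 < p := lt_of_lt_of_le one_pos hp
  set μ : Measure ℂ := volume.restrict (ball (0 : ℂ) 1) with hμ
  set q : ℝ≥0∞ := ENNReal.ofReal p with hqdef
  have hq1 : (1 : ℝ≥0∞) ≤ q := by
    rw [hqdef, ← ENNReal.ofReal_one]; exact ENNReal.ofReal_le_ofReal hp
  haveI : Fact ((1 : ℝ≥0∞) ≤ q) := ⟨hq1⟩
  have hq0 : q ≠ 0 := by
    rw [hqdef]; simp [ENNReal.ofReal_eq_zero]; linarith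
  have hqtop : q ≠ ∞ := ENNReal.ofReal_ne_top
  have hqt : q.toReal = p := ENNReal.toReal_ofReal hp0.le
  haveI : IsFiniteMeasure μ :=
    ⟨by rw [hμ, Measure.restrict_apply_univ]; exact measure_ball_lt_top⟩
  have hfn : AnalyticOnNhd ℂ f (ball (0 : ℂ) 1) :=
    (isOpen_ball.analyticOn_iff_analyticOnNhd).mp hf
  have hdc : ContinuousOn (deriv f) (ball (0 : ℂ) 1) := (hfn.deriv).continuousOn
  -- nonnegativity of C
  have hC0 : 0 ≤ C := by
    have h := hC (1 / 2) (by norm_num)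
    have h2 : (0 : ℝ) ≤ Ap p (deriv f) (1 / 2) := by
      rw [Ap, bergmanNorm]
      apply Real.rpow_nonneg
      apply mul_nonneg (inv_nonneg.mpr Real.pi_pos.le)
      exact integral_nonneg fun z => Real.rpow_nonneg (norm_nonneg _) p
    have hx : (0 : ℝ) < (1 - 1 / 2) ^ (α - 1) := Real.rpow_pos_of_pos (by norm_num) _
    nlinarith
  -- Membership in Lp of the slice functions
  have hmemh : ∀ t ∈ Set.Ioo (0 : ℝ) 1, MemLp (fun z => deriv f ((t : ℂ) * z)) q μ := by
    intro t ht
    obtain ⟨M, _, hM⟩ := stmt11_bound f hdc ht.1.le ht.2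
    have hcont : ContinuousOn (fun z => deriv f ((t : ℂ) * z)) (ball (0 : ℂ) 1) := by
      apply hdc.comp (continuous_const.mul continuous_id).continuousOn
      intro z hz
      exact stmt11_mem_ball (by linarith [ht.1]) ht.2.le hz
    exact stmt11_memlp q _ hcont M hM
  have hmemg : ∀ t ∈ Set.Ioo (0 : ℝ) 1, MemLp (fun z => z * deriv f ((t : ℂ) * z)) q μ := by
    intro t ht
    obtain ⟨M, hM0, hM⟩ := stmt11_bound f hdc ht.1.le ht.2
    have hcont : ContinuousOn (fun z => z * deriv f ((t : ℂ) * z)) (ball (0 : ℂ) 1) := by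
      apply ContinuousOn.mul continuousOn_id
      apply hdc.comp (continuous_const.mul continuous_id).continuousOn
      intro z hz
      exact stmt11_mem_ball (by linarith [ht.1]) ht.2.le hz
    apply stmt11_memlp q _ hcont M
    intro z hz
    have hz1 : ‖z‖ ≤ 1 := by
      simp only [mem_ball, dist_zero_right] at hz; linarith
    calc ‖z * deriv f ((t : ℂ) * z)‖ = ‖z‖ * ‖deriv f ((t : ℂ) * z)‖ := norm_mul _ _
      _ ≤ 1 * M := mul_le_mul hz1 (hM z hz) (norm_nonneg _) zero_le_one
      _ = M := one_mul M
  -- The eLpNorm bound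
  have helps : ∀ t ∈ Set.Ioo (0 : ℝ) 1,
      eLpNorm (fun z => z * deriv f ((t : ℂ) * z)) q μ ≤
        ENNReal.ofReal (π ^ (1 / p) * (C * (1 - t) ^ (α - 1))) := by
    intro t ht
    have step1 : eLpNorm (fun z => z * deriv f ((t : ℂ) * z)) q μ ≤
        eLpNorm (fun z => deriv f ((t : ℂ) * z)) q μ := by
      apply eLpNorm_mono_ae
      filter_upwards [ae_restrict_mem measurableSet_ball] with z hz
      have hz1 : ‖z‖ ≤ 1 := by
        simp only [mem_ball, dist_zero_right] at hz; linarith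
      calc ‖z * deriv f ((t : ℂ) * z)‖ = ‖z‖ * ‖deriv f ((t : ℂ) * z)‖ := norm_mul _ _
        _ ≤ 1 * ‖deriv f ((t : ℂ) * z)‖ :=
            mul_le_mul_of_nonneg_right hz1 (norm_nonneg _)
        _ = ‖deriv f ((t : ℂ) * z)‖ := one_mul _
    have step2 : eLpNorm (fun z => deriv f ((t : ℂ) * z)) q μ =
        ENNReal.ofReal ((∫ z, ‖deriv f ((t : ℂ) * z)‖ ^ p ∂μ) ^ p⁻¹) := by
      rw [(hmemh t ht).eLpNorm_eq_integral_rpow_norm hq0 hqtop, hqt]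
    have hI0 : 0 ≤ ∫ z, ‖deriv f ((t : ℂ) * z)‖ ^ p ∂μ :=
      integral_nonneg fun z => Real.rpow_nonneg (norm_nonneg _) p
    have step3 : (∫ z, ‖deriv f ((t : ℂ) * z)‖ ^ p ∂μ) ^ p⁻¹ ≤
        π ^ (1 / p) * (C * (1 - t) ^ (α - 1)) := by
      have hAp := hC t ht
      rw [Ap, bergmanNorm] at hAp
      have heq : (∫ z, ‖deriv f ((t : ℂ) * z)‖ ^ p ∂μ) =
          π * (π⁻¹ * ∫ z in ball (0 : ℂ) 1, ‖deriv f ((t : ℂ) * z)‖ ^ p) := by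
        rw [← mul_assoc, mul_inv_cancel₀ Real.pi_ne_zero, one_mul]
      rw [heq, Real.mul_rpow Real.pi_pos.le (by
        apply mul_nonneg (inv_nonneg.mpr Real.pi_pos.le)
        exact integral_nonneg fun z => Real.rpow_nonneg (norm_nonneg _) p)]
      rw [← one_div]
      exact mul_le_mul_of_nonneg_left (by rw [one_div]; exact (one_div p ▸ hAp))
        (Real.rpow_nonneg Real.pi_pos.le _)
    calc eLpNorm (fun z => z * deriv f ((t : ℂ) * z)) q μ ≤
        eLpNorm (fun z => deriv f ((t : ℂ) * z)) q μ := step1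
      _ = ENNReal.ofReal ((∫ z, ‖deriv f ((t : ℂ) * z)‖ ^ p ∂μ) ^ p⁻¹) := step2
      _ ≤ ENNReal.ofReal (π ^ (1 / p) * (C * (1 - t) ^ (α - 1))) :=
          ENNReal.ofReal_le_ofReal step3
  -- the bound function
  set b : ℝ → ℝ := fun t => π ^ (1 / p) * (C * (1 - t) ^ (α - 1)) with hbdef
  have hbnn : ∀ t ∈ Set.Ioo (0 : ℝ) 1, 0 ≤ b t := by
    intro t ht
    apply mul_nonneg (Real.rpow_nonneg Real.pi_pos.le _)
    exact mul_nonneg hC0 (Real.rpow_nonneg (by linarith [ht.2] : (0 : ℝ) ≤ 1 - t) _)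
  have hbint : IntegrableOn b (Set.Ioo (0 : ℝ) 1) volume := by
    rw [hbdef]
    exact ((stmt11_hbase_int hα).const_mul C).const_mul _
  -- the Lp-valued curve
  set G : ℝ → Lp ℂ q μ := fun t =>
    if h : t ∈ Set.Ioo (0 : ℝ) 1 then (hmemg t h).toLp (fun z => z * deriv f ((t : ℂ) * z))
    else 0 with hGdef
  have hGnorm : ∀ t ∈ Set.Ioo (0 : ℝ) 1, ‖G t‖ ≤ b t := by
    intro t ht
    rw [hGdef]
    simp only [dif_pos ht]
    rw [Lp.norm_toLp]
    calc (eLpNorm (fun z => z * deriv f ((t : ℂ) * z)) q μ).toReal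
        ≤ (ENNReal.ofReal (π ^ (1 / p) * (C * (1 - t) ^ (α - 1)))).toReal :=
          ENNReal.toReal_mono ENNReal.ofReal_ne_top (helps t ht)
      _ ≤ b t := le_of_eq (ENNReal.toReal_ofReal (hbnn t ht))
  -- continuity of the curve
  have hGcont : ContinuousOn G (Set.Ioo (0 : ℝ) 1) := by
    intro t₀ ht₀
    rw [Metric.continuousWithinAt_iff]
    intro ε hε
    set b' : ℝ := (1 + t₀) / 2 with hb'def
    have hb'1 : b' < 1 := by rw [hb'def]; linarith [ht₀.2]
    have ht₀b : t₀ < b' := by rw [hb'def]; linarith [ht₀.2]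
    have hb'0 : 0 < b' := by rw [hb'def]; linarith [ht₀.1]
    have hKsub : closedBall (0 : ℂ) b' ⊆ ball (0 : ℂ) 1 := closedBall_subset_ball hb'1
    have huc : UniformContinuousOn (deriv f) (closedBall (0 : ℂ) b') :=
      (isCompact_closedBall (0 : ℂ) b').uniformContinuousOn_of_continuous (hdc.mono hKsub)
    set V : ℝ := ((μ Set.univ) ^ q.toReal⁻¹).toReal with hVdef
    have hV0 : 0 ≤ V := ENNReal.toReal_nonneg
    set ε' : ℝ := ε / (V + 1) with hε'def
    have hε' : 0 < ε' := div_pos hε (by linarith)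
    rw [Metric.uniformContinuousOn_iff] at huc
    obtain ⟨δ₀, hδ₀, hδ⟩ := huc ε' hε'
    refine ⟨min δ₀ (b' - t₀), lt_min hδ₀ (by linarith), ?_⟩
    intro t ht hdist
    have hdist₀ : |t - t₀| < δ₀ := by
      rw [Real.dist_eq] at hdist
      exact lt_of_lt_of_le hdist (min_le_left _ _)
    have htb : t ≤ b' := by
      rw [Real.dist_eq] at hdist
      have := lt_of_lt_of_le hdist (min_le_right _ _)
      have := abs_lt.mp this
      linarith [this.1, this.2]
    -- pointwise bound on the difference
    have hbd : ∀ z ∈ ball (0 : ℂ) 1,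
        ‖z * deriv f ((t : ℂ) * z) - z * deriv f ((t₀ : ℂ) * z)‖ ≤ ε' := by
      intro z hz
      have hz1 : ‖z‖ ≤ 1 := by
        simp only [mem_ball, dist_zero_right] at hz; linarith
      have hmem1 : (t : ℂ) * z ∈ closedBall (0 : ℂ) b' := by
        simp only [mem_closedBall, dist_zero_right]
        calc ‖(t : ℂ) * z‖ = |t| * ‖z‖ := by
              rw [norm_mul, Complex.norm_real, Real.norm_eq_abs]
          _ ≤ b' * 1 := mul_le_mul (by rw [_root_.abs_of_nonneg ht.1.le]; exact htb) hz1
              (norm_nonneg _) hb'0.le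
          _ = b' := mul_one _
      have hmem2 : (t₀ : ℂ) * z ∈ closedBall (0 : ℂ) b' := by
        simp only [mem_closedBall, dist_zero_right]
        calc ‖(t₀ : ℂ) * z‖ = |t₀| * ‖z‖ := by
              rw [norm_mul, Complex.norm_real, Real.norm_eq_abs]
          _ ≤ b' * 1 := mul_le_mul (by rw [_root_.abs_of_nonneg ht₀.1.le]; linarith) hz1
              (norm_nonneg _) hb'0.le
          _ = b' := mul_one _
      have hdd : dist ((t : ℂ) * z) ((t₀ : ℂ) * z) < δ₀ := by
        rw [dist_eq_norm]
        calc ‖(t : ℂ) * z - (t₀ : ℂ) * z‖ = ‖((t - t₀ : ℝ) : ℂ)‖ * ‖z‖ := by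
              rw [← norm_mul]; push_cast; ring_nf
          _ ≤ |t - t₀| * 1 := by
              rw [Complex.norm_real, Real.norm_eq_abs]
              exact mul_le_mul_of_nonneg_left hz1 (abs_nonneg _)
          _ < δ₀ := by rwa [mul_one]
      have := hδ _ hmem1 _ hmem2 hdd
      rw [dist_eq_norm] at this
      calc ‖z * deriv f ((t : ℂ) * z) - z * deriv f ((t₀ : ℂ) * z)‖
          = ‖z‖ * ‖deriv f ((t : ℂ) * z) - deriv f ((t₀ : ℂ) * z)‖ := by
            rw [← norm_mul, mul_sub]
        _ ≤ 1 * ε' := mul_le_mul hz1 this.le (norm_nonneg _) zero_le_one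
        _ = ε' := one_mul _
    -- conclude
    have ht' : t ∈ Set.Ioo (0 : ℝ) 1 := ht
    rw [hGdef]
    simp only [dif_pos ht', dif_pos ht₀]
    rw [dist_eq_norm, ← MemLp.toLp_sub, Lp.norm_toLp]
    have hbd' : ∀ᵐ z ∂μ, ‖((fun z => z * deriv f ((t : ℂ) * z)) -
        fun z => z * deriv f ((t₀ : ℂ) * z)) z‖ ≤ ε' := by
      filter_upwards [ae_restrict_mem measurableSet_ball] with z hz
      simpa using hbd z hz
    calc (eLpNorm ((fun z => z * deriv f ((t : ℂ) * z)) -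
          fun z => z * deriv f ((t₀ : ℂ) * z)) q μ).toReal
        ≤ ((μ Set.univ) ^ q.toReal⁻¹ * ENNReal.ofReal ε').toReal := by
          apply ENNReal.toReal_mono
          · exact ENNReal.mul_ne_top (ENNReal.rpow_ne_top_of_nonneg
              (by positivity) (measure_ne_top μ _)) ENNReal.ofReal_ne_top
          · exact eLpNorm_le_of_ae_bound hbd'
      _ = V * ε' := by rw [ENNReal.toReal_mul, ENNReal.toReal_ofReal hε'.le]
      _ < ε := by
          rw [hε'def, mul_div_assoc'] at *
          rw [div_lt_iff₀ (by linarith : (0:ℝ) < V + 1)]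
          nlinarith
  have hGint : Integrable G (volume.restrict (Set.Ioo (0 : ℝ) 1)) := by
    apply Integrable.mono' hbint (hGcont.aestronglyMeasurable measurableSet_Ioo)
    filter_upwards [ae_restrict_mem measurableSet_Ioo] with t ht using hGnorm t ht
  -- the Bochner integral
  set H : Lp ℂ q μ := ∫ t in Set.Ioo (0 : ℝ) 1, G t with hHdef
  have hHnorm : ‖H‖ ≤ π ^ (1 / p) * (C * α⁻¹) := by
    calc ‖H‖ ≤ ∫ t in Set.Ioo (0 : ℝ) 1, ‖G t‖ := norm_integral_le_integral_norm _
      _ ≤ ∫ t in Set.Ioo (0 : ℝ) 1, b t := by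
          apply integral_mono_ae hGint.norm hbint
          filter_upwards [ae_restrict_mem measurableSet_Ioo] with t ht using hGnorm t ht
      _ = π ^ (1 / p) * (C * α⁻¹) := by
          rw [hbdef]
          rw [integral_const_mul, integral_const_mul, stmt11_hIoo hα]
  -- joint measurability and integrability
  have hφmeas : AEStronglyMeasurable (fun w : ℝ × ℂ => w.2 * deriv f ((w.1 : ℂ) * w.2))
      ((volume.restrict (Set.Ioo (0 : ℝ) 1)).prod μ) := by
    rw [hμ, Measure.prod_restrict]
    apply ContinuousOn.aestronglyMeasurable _ (measurableSet_Ioo.prod measurableSet_ball)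
    apply ContinuousOn.mul continuous_snd.continuousOn
    apply hdc.comp ((Complex.continuous_ofReal.comp continuous_fst).mul
      continuous_snd).continuousOn
    rintro ⟨t, z⟩ ⟨ht, hz⟩
    exact stmt11_mem_ball (by linarith [ht.1]) ht.2.le hz
  have hφint : Integrable (fun w : ℝ × ℂ => w.2 * deriv f ((w.1 : ℂ) * w.2))
      ((volume.restrict (Set.Ioo (0 : ℝ) 1)).prod μ) := by
    refine ⟨hφmeas, ?_⟩
    have hkey : (∫⁻ w, (‖w.2 * deriv f ((w.1 : ℂ) * w.2)‖₊ : ℝ≥0∞)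
        ∂((volume.restrict (Set.Ioo (0 : ℝ) 1)).prod μ)) < ⊤ := by
      rw [MeasureTheory.lintegral_prod _ hφmeas.aemeasurable.nnnorm.coe_nnreal_ennreal]
      have hKtop : (μ Set.univ ^ (1 - 1 / q.toReal)) ≠ ⊤ :=
        ENNReal.rpow_ne_top_of_nonneg (stmt11_exp_nonneg hq1) (measure_ne_top μ _)
      have hfin : (∫⁻ t in Set.Ioo (0 : ℝ) 1, ENNReal.ofReal (b t)) < ⊤ := by
        calc (∫⁻ t in Set.Ioo (0 : ℝ) 1, ENNReal.ofReal (b t))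
            ≤ ∫⁻ t in Set.Ioo (0 : ℝ) 1, (‖b t‖₊ : ℝ≥0∞) := by
              apply lintegral_mono
              intro t
              show ENNReal.ofReal (b t) ≤ (‖b t‖₊ : ℝ≥0∞)
              rw [← enorm_eq_nnnorm, Real.enorm_eq_ofReal_abs]
              exact ENNReal.ofReal_le_ofReal (le_abs_self _)
          _ < ⊤ := hbint.2
      calc (∫⁻ t in Set.Ioo (0 : ℝ) 1, ∫⁻ z, (‖z * deriv f ((t : ℂ) * z)‖₊ : ℝ≥0∞) ∂μ)
          ≤ ∫⁻ t in Set.Ioo (0 : ℝ) 1,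
              ENNReal.ofReal (b t) * (μ Set.univ ^ (1 - 1 / q.toReal)) := by
            apply lintegral_mono_ae
            filter_upwards [ae_restrict_mem measurableSet_Ioo] with t ht
            calc (∫⁻ z, (‖z * deriv f ((t : ℂ) * z)‖₊ : ℝ≥0∞) ∂μ)
                = eLpNorm (fun z => z * deriv f ((t : ℂ) * z)) 1 μ :=
                  by simp only [← enorm_eq_nnnorm]; exact eLpNorm_one_eq_lintegral_enorm.symm
              _ ≤ eLpNorm (fun z => z * deriv f ((t : ℂ) * z)) q μ *
                    (μ Set.univ ^ (1 - 1 / q.toReal)) := by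
                  simpa using eLpNorm_le_eLpNorm_mul_rpow_measure_univ hq1
                    ((hmemg t ht).aestronglyMeasurable)
              _ ≤ ENNReal.ofReal (b t) * (μ Set.univ ^ (1 - 1 / q.toReal)) :=
                  mul_le_mul_left (by rw [hbdef]; exact helps t ht) _
        _ = (∫⁻ t in Set.Ioo (0 : ℝ) 1, ENNReal.ofReal (b t)) *
              (μ Set.univ ^ (1 - 1 / q.toReal)) := lintegral_mul_const' _ _ hKtop
        _ < ⊤ := ENNReal.mul_lt_top hfin hKtop.lt_top
    exact hkey
  -- identification of H with f - f 0
  have hptae : (fun z => ∫ t in Set.Ioo (0 : ℝ) 1, (z * deriv f ((t : ℂ) * z))) =ᵐ[μ]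
      fun z => f z - f 0 := by
    filter_upwards [ae_restrict_mem measurableSet_ball] with z hz
    exact (stmt11_ftc f hfn hz).symm
  have hint2 : Integrable (fun z => f z - f 0) μ := by
    apply Integrable.congr _ hptae
    exact hφint.integral_prod_right
  have hHint : Integrable (⇑H) μ :=
    memLp_one_iff_integrable.mp ((Lp.memLp H).mono_exponent hq1)
  have hae : ⇑H =ᵐ[μ] fun z => f z - f 0 := by
    apply Integrable.ae_eq_of_forall_setIntegral_eq _ _ hHint hint2
    intro s hs hμs
    calc ∫ z in s, H z ∂μ = (setIntCLM μ q s) H := rfl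
      _ = ∫ t in Set.Ioo (0 : ℝ) 1, (setIntCLM μ q s) (G t) :=
          (ContinuousLinearMap.integral_comp_comm _ hGint).symm
      _ = ∫ t in Set.Ioo (0 : ℝ) 1, ∫ z in s, (z * deriv f ((t : ℂ) * z)) ∂μ := by
          apply integral_congr_ae
          filter_upwards [ae_restrict_mem measurableSet_Ioo] with t ht
          rw [hGdef]
          simp only [dif_pos ht]
          rw [setIntCLM_apply]
          exact integral_congr_ae (ae_restrict_of_ae ((hmemg t ht).coeFn_toLp))
      _ = ∫ z in s, (∫ t in Set.Ioo (0 : ℝ) 1, z * deriv f ((t : ℂ) * z)) ∂μ := by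
          apply integral_integral_swap
          have heq : (volume.restrict (Set.Ioo (0 : ℝ) 1)).prod (μ.restrict s)
              = ((volume.restrict (Set.Ioo (0 : ℝ) 1)).prod μ).restrict (Set.univ ×ˢ s) := by
            rw [← Measure.prod_restrict, Measure.restrict_univ]
          rw [heq]
          exact hφint.restrict
      _ = ∫ z in s, (f z - f 0) ∂μ := by
          apply integral_congr_ae
          exact ae_restrict_of_ae hptae
  have hmemsub : MemLp (fun z => f z - f 0) q μ := (Lp.memLp H).ae_eq hae
  -- the norm bound
  have hXnn : 0 ≤ ∫ z, ‖f z - f 0‖ ^ p ∂μ :=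
    integral_nonneg fun z => Real.rpow_nonneg (norm_nonneg _) p
  have hX : (∫ z, ‖f z - f 0‖ ^ p ∂μ) ^ (1 / p) ≤ π ^ (1 / p) * (C * α⁻¹) := by
    have h1 := hmemsub.eLpNorm_eq_integral_rpow_norm hq0 hqtop
    rw [hqt] at h1
    have h2 : eLpNorm (fun z => f z - f 0) q μ = eLpNorm (⇑H) q μ :=
      eLpNorm_congr_ae hae.symm
    have h4 : (∫ z, ‖f z - f 0‖ ^ p ∂μ) ^ p⁻¹ = ‖H‖ := by
      rw [Lp.norm_def, ← h2, h1, ENNReal.toReal_ofReal (Real.rpow_nonneg hXnn _)]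
    rw [one_div, h4]
    rwa [one_div] at hHnorm
  have hfinal : bergmanNorm p (fun z => f z - f 0) ≤ C / α := by
    rw [bergmanNorm]
    have heq2 : (π⁻¹ * ∫ z in ball (0 : ℂ) 1, ‖f z - f 0‖ ^ p) ^ (1 / p)
        = (π⁻¹) ^ (1 / p) * (∫ z, ‖f z - f 0‖ ^ p ∂μ) ^ (1 / p) :=
      Real.mul_rpow (inv_nonneg.mpr Real.pi_pos.le) hXnn
    rw [heq2]
    calc (π⁻¹) ^ (1 / p) * (∫ z, ‖f z - f 0‖ ^ p ∂μ) ^ (1 / p)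
        ≤ (π⁻¹) ^ (1 / p) * (π ^ (1 / p) * (C * α⁻¹)) :=
          mul_le_mul_of_nonneg_left hX (Real.rpow_nonneg (inv_nonneg.mpr Real.pi_pos.le) _)
      _ = C / α := by
          rw [← mul_assoc, ← Real.mul_rpow (inv_nonneg.mpr Real.pi_pos.le) Real.pi_pos.le,
            inv_mul_cancel₀ Real.pi_ne_zero, Real.one_rpow, one_mul, div_eq_mul_inv]
  refine ⟨⟨hf, ?_⟩, hfinal⟩
  have hmemf : MemLp f q μ := by
    have h := hmemsub.add (memLp_const (f 0))
    have heq3 : ((fun z => f z - f 0) + fun _ => f 0) = f := by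
      funext z; simp
    rwa [heq3] at h
  have h := hmemf.integrable_norm_rpow hq0 hqtop
  rw [hqt] at h
  exact h
end

section
/- Let 1 ≤ p < ∞ and f ∈ A^p with ‖r_t(f) - f‖_{A^p} ≤ C|t| for all t near 0. Then f' ∈ A^p. -/
open Complex MeasureTheory Real Metric Set Filter Topology Asymptotics

theorem stmt14 (p : ℝ) (hp : 1 ≤ p) (f : ℂ → ℂ) (hf : MemAp p f) (C : ℝ)
    (hC : ∀ᶠ t : ℝ in 𝓝 0,
      bergmanNorm p (fun z => f (Complex.exp ((t : ℂ) * Complex.I) * z) - f z) ≤ C * |t|) :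
    MemAp p (deriv f) := by
  obtain ⟨hfa, hfi⟩ := hf
  have hp0 : (0:ℝ) < p := lt_of_lt_of_le one_pos hp
  have hπ : (0:ℝ) < π := Real.pi_pos
  have hfa' : AnalyticOnNhd ℂ f (ball (0:ℂ) 1) := isOpen_ball.analyticOn_iff_analyticOnNhd.mp hfa
  have hda : AnalyticOnNhd ℂ (deriv f) (ball (0:ℂ) 1) := hfa'.deriv
  refine ⟨hda.analyticOn, ?_⟩
  set e : ℝ → ℂ := fun t => Complex.exp ((t:ℂ) * Complex.I) with he
  -- continuity facts
  have hcont : ContinuousOn f (ball (0:ℂ) 1) := hfa.continuousOn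
  have habs : ∀ (t : ℝ) (z : ℂ), ‖e t * z‖ = ‖z‖ := by
    intro t z
    rw [norm_mul]
    simp [he, Complex.norm_exp_ofReal_mul_I]
  have hmaps : ∀ t : ℝ, MapsTo (fun z : ℂ => e t * z) (ball (0:ℂ) 1) (ball (0:ℂ) 1) := by
    intro t z hz
    simp only [mem_ball, dist_zero_right] at hz ⊢
    rwa [habs]
  have hcr : ∀ t : ℝ, ContinuousOn (fun z => f (e t * z)) (ball (0:ℂ) 1) := fun t =>
    hcont.comp ((continuous_mul_left _).continuousOn) (hmaps t)
  -- rotation is measure preserving on the ball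
  have hpre : ∀ t : ℝ, (fun z : ℂ => e t * z) ⁻¹' (ball 0 1) = ball 0 1 := by
    intro t; ext z
    simp only [mem_preimage, mem_ball, dist_zero_right]
    rw [habs]
  have hrotfun : ∀ t : ℝ, ⇑(rotation (Circle.exp t)) = fun z : ℂ => e t * z := by
    intro t; funext z; simp [Circle.coe_exp, he]
  have hmp : ∀ t : ℝ, MeasurePreserving (fun z : ℂ => e t * z)
      ((volume : Measure ℂ).restrict (ball 0 1)) ((volume : Measure ℂ).restrict (ball 0 1)) := by
    intro t
    have h1 : MeasurePreserving (fun z : ℂ => e t * z) (volume : Measure ℂ) volume :=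
      hrotfun t ▸ (rotation (Circle.exp t)).measurePreserving
    have := h1.restrict_preimage (s := ball 0 1) measurableSet_ball
    rwa [hpre t] at this
  have hemb : ∀ t : ℝ, MeasurableEmbedding (fun z : ℂ => e t * z) := fun t =>
    hrotfun t ▸ (rotation (Circle.exp t)).toHomeomorph.measurableEmbedding
  have hrot_int : ∀ t : ℝ, IntegrableOn (fun z => ‖f (e t * z)‖ ^ p) (ball (0:ℂ) 1) volume := by
    intro t
    have := ((hmp t).integrable_comp_emb (hemb t)).mpr hfi
    exact this
  -- pointwise inequality
  have keyineq : ∀ a b : ℂ, ‖a - b‖ ^ p ≤ 2 ^ p * (‖a‖ ^ p + ‖b‖ ^ p) := by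
    intro a b
    have h1 : ‖a - b‖ ≤ 2 * max ‖a‖ ‖b‖ := by
      have := norm_sub_le a b
      have h2 := le_max_left ‖a‖ ‖b‖
      have h3 := le_max_right ‖a‖ ‖b‖
      linarith
    have hmax : (0:ℝ) ≤ max ‖a‖ ‖b‖ := le_trans (norm_nonneg a) (le_max_left _ _)
    calc ‖a - b‖ ^ p ≤ (2 * max ‖a‖ ‖b‖) ^ p :=
          Real.rpow_le_rpow (norm_nonneg _) h1 hp0.le
      _ = 2 ^ p * (max ‖a‖ ‖b‖) ^ p := Real.mul_rpow (by norm_num) hmax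
      _ ≤ 2 ^ p * (‖a‖ ^ p + ‖b‖ ^ p) := by
          refine mul_le_mul_of_nonneg_left ?_ (Real.rpow_nonneg (by norm_num) p)
          rcases le_total ‖a‖ ‖b‖ with h | h
          · rw [max_eq_right h]
            have := Real.rpow_nonneg (norm_nonneg a) p
            linarith
          · rw [max_eq_left h]
            have := Real.rpow_nonneg (norm_nonneg b) p
            linarith
  have hdiff_int : ∀ t : ℝ,
      IntegrableOn (fun z => ‖f (e t * z) - f z‖ ^ p) (ball (0:ℂ) 1) volume := by
    intro t
    refine Integrable.mono' (g := fun z => 2 ^ p * (‖f (e t * z)‖ ^ p + ‖f z‖ ^ p))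
      (((hrot_int t).add hfi).const_mul _) ?_ ?_
    · exact (((hcr t).sub hcont).norm.rpow_const fun x _ => Or.inr hp0.le).aestronglyMeasurable
        measurableSet_ball
    · refine ae_of_all _ fun z => ?_
      rw [Real.norm_of_nonneg (Real.rpow_nonneg (norm_nonneg _) _)]
      exact keyineq _ _
  -- the hypothesis on a small interval
  obtain ⟨δ, hδpos, hδ⟩ : ∃ δ > 0, ∀ t : ℝ, |t| < δ →
      bergmanNorm p (fun z => f (e t * z) - f z) ≤ C * |t| := by
    rcases Metric.eventually_nhds_iff.mp hC with ⟨δ, hδpos, h⟩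
    exact ⟨δ, hδpos, fun t ht => h (by simpa [Real.dist_eq] using ht)⟩
  have hbn_nonneg : ∀ t : ℝ, 0 ≤ bergmanNorm p (fun z => f (e t * z) - f z) := by
    intro t
    exact Real.rpow_nonneg (mul_nonneg (by positivity)
      (setIntegral_nonneg measurableSet_ball fun z _ => Real.rpow_nonneg (norm_nonneg _) _)) _
  have hC0 : 0 ≤ C := by
    have h1 := hδ (δ/2) (by rw [abs_of_pos (half_pos hδpos)]; linarith)
    have h2 := hbn_nonneg (δ/2)
    rw [abs_of_pos (half_pos hδpos)] at h1
    nlinarith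
  -- lintegral bound for small positive t
  have hlint : ∀ t : ℝ, 0 < t → t < δ →
      ∫⁻ z in ball (0:ℂ) 1, ENNReal.ofReal (‖f (e t * z) - f z‖ ^ p)
        ≤ ENNReal.ofReal (π * (C * t) ^ p) := by
    intro t ht htδ
    rw [← ofReal_integral_eq_lintegral_ofReal (hdiff_int t)
      (ae_of_all _ fun z => Real.rpow_nonneg (norm_nonneg _) _)]
    apply ENNReal.ofReal_le_ofReal
    have hb := hδ t (by rwa [abs_of_pos ht])
    rw [abs_of_pos ht] at hb
    simp only [bergmanNorm] at hb
    set x := ∫ z in ball (0:ℂ) 1, ‖f (e t * z) - f z‖ ^ p with hx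
    have hx0 : 0 ≤ x :=
      setIntegral_nonneg measurableSet_ball fun z _ => Real.rpow_nonneg (norm_nonneg _) _
    have hx' : 0 ≤ π⁻¹ * x := mul_nonneg (by positivity) hx0
    have h2 : ((π⁻¹ * x) ^ (1/p)) ^ p ≤ (C * t) ^ p :=
      Real.rpow_le_rpow (Real.rpow_nonneg hx' _) hb hp0.le
    rw [← Real.rpow_mul hx', one_div, inv_mul_cancel₀ hp0.ne', Real.rpow_one] at h2
    calc x = π * (π⁻¹ * x) := by field_simp
      _ ≤ π * (C * t) ^ p := by nlinarith
  -- the sequence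
  set u : ℕ → ℝ := fun n => δ / (2 * (n + 1)) with hu
  have hu_pos : ∀ n, 0 < u n := fun n => by positivity
  have hu_lt : ∀ n, u n < δ := by
    intro n
    rw [hu]
    rw [div_lt_iff₀ (by positivity)]
    nlinarith [Nat.cast_nonneg (α := ℝ) n]
  have hu_tend : Tendsto u atTop (𝓝 0) := by
    have h2 : u = fun n : ℕ => (δ/2) * (1/(n+1)) := by
      funext n; simp only [hu]; rw [div_mul_eq_div_div, mul_one_div]
    rw [h2]
    simpa using tendsto_one_div_add_atTop_nhds_zero_nat.const_mul (δ/2)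
  set B := ENNReal.ofReal (π * C ^ p) with hB
  set g : ℕ → ℂ → ENNReal :=
    fun n z => ENNReal.ofReal ((‖f (e (u n) * z) - f z‖ / u n) ^ p) with hg
  have hg_meas : ∀ n, AEMeasurable (g n) (volume.restrict (ball (0:ℂ) 1)) := by
    intro n
    refine ContinuousOn.aemeasurable ?_ measurableSet_ball
    exact ENNReal.continuous_ofReal.comp_continuousOn
      ((((hcr _).sub hcont).norm.div_const _).rpow_const fun x _ => Or.inr hp0.le)
  have hg_bound : ∀ n, ∫⁻ z in ball (0:ℂ) 1, g n z ≤ B := by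
    intro n
    have ht := hu_pos n
    have htp : (0:ℝ) < u n ^ p := Real.rpow_pos_of_pos ht p
    have h1 : ∀ z : ℂ, g n z
        = ENNReal.ofReal (‖f (e (u n) * z) - f z‖ ^ p) * (ENNReal.ofReal (u n ^ p))⁻¹ := by
      intro z
      show ENNReal.ofReal ((‖f (e (u n) * z) - f z‖ / u n) ^ p) = _
      rw [Real.div_rpow (norm_nonneg _) ht.le, ENNReal.ofReal_div_of_pos htp, div_eq_mul_inv]
    calc ∫⁻ z in ball (0:ℂ) 1, g n z
        = (∫⁻ z in ball (0:ℂ) 1, ENNReal.ofReal (‖f (e (u n) * z) - f z‖ ^ p))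
            * (ENNReal.ofReal (u n ^ p))⁻¹ := by
          simp only [h1]
          rw [lintegral_mul_const' _ _ (by simp [ENNReal.inv_ne_top, (ENNReal.ofReal_pos.mpr htp).ne'])]
      _ ≤ ENNReal.ofReal (π * (C * u n) ^ p) * (ENNReal.ofReal (u n ^ p))⁻¹ := by
          exact mul_le_mul_left (hlint (u n) ht (hu_lt n)) _
      _ = B := by
          rw [Real.mul_rpow hC0 ht.le, ← mul_assoc, ENNReal.ofReal_mul (by positivity),
            ← div_eq_mul_inv, mul_div_assoc,
            ENNReal.div_self (ENNReal.ofReal_pos.mpr htp).ne' ENNReal.ofReal_ne_top, mul_one, hB]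
  -- pointwise convergence
  have hpt : ∀ z ∈ ball (0:ℂ) 1, Tendsto (fun n => g n z) atTop
      (𝓝 (ENNReal.ofReal ((‖z‖ * ‖deriv f z‖) ^ p))) := by
    intro z hz
    have hdz : DifferentiableAt ℂ f z := (hfa' z hz).differentiableAt
    have h1 : HasDerivAt (fun t : ℝ => (t:ℂ) * Complex.I) Complex.I 0 := by
      simpa using (Complex.ofRealCLM.hasDerivAt (x := (0:ℝ))).mul_const Complex.I
    have h2 : HasDerivAt (fun t : ℝ => Complex.exp ((t:ℂ) * Complex.I)) Complex.I 0 := by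
      have := (Complex.hasDerivAt_exp (((0:ℝ):ℂ) * Complex.I)).scomp (0:ℝ) h1
      simpa [Function.comp_def] using this
    have hc : HasDerivAt (fun t : ℝ => e t * z) (Complex.I * z) 0 := h2.mul_const z
    have hd : HasDerivAt (fun t : ℝ => f (e t * z)) ((Complex.I * z) • deriv f z) 0 := by
      have := hdz.hasDerivAt.scomp_of_eq (0:ℝ) hc (by simp [he])
      simpa [Function.comp_def] using this
    have hslope := hasDerivAt_iff_tendsto_slope.mp hd
    have hu' : Tendsto u atTop (𝓝[≠] (0:ℝ)) :=
      tendsto_nhdsWithin_of_tendsto_nhds_of_eventually_within _ hu_tend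
        (Eventually.of_forall fun n => (hu_pos n).ne')
    have h3 : Tendsto (fun n => ‖slope (fun t : ℝ => f (e t * z)) 0 (u n)‖) atTop
        (𝓝 ‖(Complex.I * z) • deriv f z‖) := (hslope.comp hu').norm
    have heq : ∀ n, ‖slope (fun t : ℝ => f (e t * z)) 0 (u n)‖
        = ‖f (e (u n) * z) - f z‖ / u n := by
      intro n
      rw [slope_def_module, sub_zero, norm_smul, norm_inv, Real.norm_eq_abs,
        abs_of_pos (hu_pos n)]
      rw [show e 0 * z = z by simp [he], div_eq_inv_mul]
    have hnl : ‖(Complex.I * z) • deriv f z‖ = ‖z‖ * ‖deriv f z‖ := by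
      rw [norm_smul, norm_mul]
      simp
    rw [hnl] at h3
    have h4 : Tendsto (fun n => ‖f (e (u n) * z) - f z‖ / u n) atTop
        (𝓝 (‖z‖ * ‖deriv f z‖)) := by
      refine Tendsto.congr (fun n => heq n) h3
    have h5 : Tendsto (fun n => (‖f (e (u n) * z) - f z‖ / u n) ^ p) atTop
        (𝓝 ((‖z‖ * ‖deriv f z‖) ^ p)) :=
      ((Real.continuousAt_rpow_const _ p (Or.inr hp0.le)).tendsto).comp h4
    exact (ENNReal.continuous_ofReal.tendsto _).comp h5
  -- Fatou
  have hkey : ∫⁻ z in ball (0:ℂ) 1, ENNReal.ofReal ((‖z‖ * ‖deriv f z‖) ^ p) ≤ B := by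
    have hcongr : ∫⁻ z in ball (0:ℂ) 1, ENNReal.ofReal ((‖z‖ * ‖deriv f z‖) ^ p)
        = ∫⁻ z in ball (0:ℂ) 1, Filter.liminf (fun n => g n z) atTop := by
      refine lintegral_congr_ae ?_
      filter_upwards [ae_restrict_mem measurableSet_ball] with z hz
      exact ((hpt z hz).liminf_eq).symm
    rw [hcongr]
    refine le_trans (lintegral_liminf_le' hg_meas) ?_
    refine le_trans (Filter.liminf_le_liminf (Eventually.of_forall hg_bound)) ?_
    simp
  -- conclude integrability
  have hsub1 : closedBall (0:ℂ) 2⁻¹ ⊆ ball 0 1 := closedBall_subset_ball (by norm_num)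
  have hdc : ContinuousOn (fun z => ‖deriv f z‖ ^ p) (ball (0:ℂ) 1) :=
    hda.continuousOn.norm.rpow_const fun x _ => Or.inr hp0.le
  have int1 : IntegrableOn (fun z => ‖deriv f z‖ ^ p) (closedBall (0:ℂ) 2⁻¹) volume :=
    (hdc.mono hsub1).integrableOn_compact (isCompact_closedBall _ _)
  have hS2m : MeasurableSet (ball (0:ℂ) 1 \ closedBall 0 2⁻¹) :=
    measurableSet_ball.diff measurableSet_closedBall
  have int2 : IntegrableOn (fun z => ‖deriv f z‖ ^ p)
      (ball (0:ℂ) 1 \ closedBall 0 2⁻¹) volume := by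
    constructor
    · exact (hdc.mono diff_subset).aestronglyMeasurable hS2m
    · rw [hasFiniteIntegral_iff_norm]
      have hb : ∫⁻ z in ball (0:ℂ) 1 \ closedBall 0 2⁻¹, ENNReal.ofReal ‖‖deriv f z‖ ^ p‖
          ≤ ENNReal.ofReal (2 ^ p) * B := by
        have step1 : ∀ z ∈ ball (0:ℂ) 1 \ closedBall (0:ℂ) 2⁻¹,
            ENNReal.ofReal ‖‖deriv f z‖ ^ p‖
              ≤ ENNReal.ofReal (2 ^ p) * ENNReal.ofReal ((‖z‖ * ‖deriv f z‖) ^ p) := by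
          intro z hz
          have hz2 : (2:ℝ)⁻¹ < ‖z‖ := by
            have := hz.2
            simpa [mem_closedBall, dist_zero_right, not_le] using this
          rw [Real.norm_of_nonneg (Real.rpow_nonneg (norm_nonneg _) _),
            ← ENNReal.ofReal_mul (by positivity)]
          apply ENNReal.ofReal_le_ofReal
          have h5 : ‖deriv f z‖ ≤ 2 * (‖z‖ * ‖deriv f z‖) := by
            nlinarith [norm_nonneg (deriv f z)]
          calc ‖deriv f z‖ ^ p ≤ (2 * (‖z‖ * ‖deriv f z‖)) ^ p :=
                Real.rpow_le_rpow (norm_nonneg _) h5 hp0.le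
            _ = 2 ^ p * (‖z‖ * ‖deriv f z‖) ^ p := Real.mul_rpow (by norm_num) (by positivity)
        refine le_trans (lintegral_mono_ae (g := fun z : ℂ =>
            ENNReal.ofReal (2 ^ p) * ENNReal.ofReal ((‖z‖ * ‖deriv f z‖) ^ p)) ?_) ?_
        · filter_upwards [ae_restrict_mem hS2m] with z hz
          exact step1 z hz
        · rw [lintegral_const_mul' _ _ ENNReal.ofReal_ne_top]
          refine mul_le_mul_right ?_ _
          refine le_trans (lintegral_mono' (Measure.restrict_mono diff_subset le_rfl) le_rfl) hkey
      exact lt_of_le_of_lt hb (ENNReal.mul_lt_top ENNReal.ofReal_lt_top ENNReal.ofReal_lt_top)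
  have hun : IntegrableOn (fun z => ‖deriv f z‖ ^ p)
      (closedBall (0:ℂ) 2⁻¹ ∪ (ball 0 1 \ closedBall 0 2⁻¹)) volume := int1.union int2
  refine hun.mono_set fun z hz => ?_
  by_cases h : z ∈ closedBall (0:ℂ) 2⁻¹
  · exact Or.inl h
  · exact Or.inr ⟨hz, h⟩
end

section
/- Let 1 ≤ p < ∞, 0 < α ≤ 1, and f analytic on the unit disc with A_p(s, f') ≤ C(1-s)^{α-1} for s ∈ (0,1). Then ‖f_r - f‖_{A^p} ≤ ∫_r^1 A_p(s, f') ds = O((1-r)^α) as r → 1⁻. -/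
open Complex MeasureTheory Real Metric Set Filter Topology Asymptotics

lemma Ap_eq (p : ℝ) (g : ℂ → ℂ) (t : ℝ) :
    Ap p g t = (π⁻¹) ^ (1/p) * (∫ z in ball (0 : ℂ) 1, ‖g ((t:ℂ) * z)‖ ^ p) ^ (1/p) := by
  have h1 : (0:ℝ) ≤ π⁻¹ := by positivity
  have h2 : (0:ℝ) ≤ ∫ z in ball (0 : ℂ) 1, ‖g ((t:ℂ) * z)‖ ^ p :=
    integral_nonneg fun z => Real.rpow_nonneg (norm_nonneg _) _
  rw [Ap, bergmanNorm, Real.mul_rpow h1 h2]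

lemma Ap_nonneg (p : ℝ) (g : ℂ → ℂ) (t : ℝ) : 0 ≤ Ap p g t := by
  rw [Ap_eq]
  have h2 : (0:ℝ) ≤ ∫ z in ball (0 : ℂ) 1, ‖g ((t:ℂ) * z)‖ ^ p :=
    integral_nonneg fun z => Real.rpow_nonneg (norm_nonneg _) _
  positivity

lemma smul_mem_ball {t : ℝ} (ht0 : 0 ≤ t) (ht1 : t ≤ 1) {z : ℂ} (hz : z ∈ ball (0:ℂ) 1) :
    (t:ℂ) * z ∈ ball (0:ℂ) 1 := by
  rw [mem_ball_zero_iff] at hz ⊢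
  rw [norm_mul, Complex.norm_real, Real.norm_of_nonneg ht0]
  nlinarith [norm_nonneg z]

lemma smul_mem_closedBall {t b : ℝ} (ht0 : 0 ≤ t) (htb : t ≤ b) {z : ℂ} (hz : z ∈ ball (0:ℂ) 1) :
    (t:ℂ) * z ∈ closedBall (0:ℂ) b := by
  rw [mem_ball_zero_iff] at hz
  rw [mem_closedBall_zero_iff, norm_mul, Complex.norm_real, Real.norm_of_nonneg ht0]
  nlinarith [norm_nonneg z]


-- derivative of s ↦ f(s z) along the real line
lemma pt_deriv {f : ℂ → ℂ} (hf : AnalyticOnNhd ℂ f (ball (0:ℂ) 1)) {z : ℂ}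
    (hz : z ∈ ball (0:ℂ) 1) {t : ℝ} (hm : (t:ℂ) * z ∈ ball (0:ℂ) 1) :
    HasDerivAt (fun s : ℝ => f ((s:ℂ) * z)) (z * deriv f ((t:ℂ) * z)) t := by
  have h1 : HasDerivAt f (deriv f ((t:ℂ)*z)) ((t:ℂ)*z) :=
    (hf _ hm).differentiableAt.hasDerivAt
  have h2 : HasDerivAt (fun w : ℂ => w * z) z (t:ℂ) := by
    simpa using (hasDerivAt_id (t:ℂ)).mul_const z
  have h3 : HasDerivAt (fun w : ℂ => f (w * z)) (deriv f ((t:ℂ)*z) * z) (t:ℂ) :=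
    HasDerivAt.comp (t:ℂ) h1 h2
  have := h3.comp_ofReal
  simpa [mul_comm] using this

-- uniform continuity engine
lemma ucont {g : ℂ → ℂ} (hg : ContinuousOn g (ball (0:ℂ) 1)) {b : ℝ} (hb0 : 0 ≤ b) (hb : b < 1)
    {ε : ℝ} (hε : 0 < ε) :
    ∃ δ > 0, ∀ s t : ℝ, s ∈ Icc 0 b → t ∈ Icc 0 b → |s - t| < δ →
      ∀ z ∈ ball (0:ℂ) 1, ‖g ((s:ℂ)*z) - g ((t:ℂ)*z)‖ ≤ ε := by
  have hK : closedBall (0:ℂ) b ⊆ ball (0:ℂ) 1 := closedBall_subset_ball hb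
  have huc : UniformContinuousOn g (closedBall (0:ℂ) b) :=
    (isCompact_closedBall _ _).uniformContinuousOn_of_continuous (hg.mono hK)
  rw [Metric.uniformContinuousOn_iff] at huc
  obtain ⟨δ, hδ, hδ'⟩ := huc ε hε
  refine ⟨δ, hδ, fun s t hs ht hst z hz => ?_⟩
  have h1 : (s:ℂ)*z ∈ closedBall (0:ℂ) b := smul_mem_closedBall hs.1 hs.2 hz
  have h2 : (t:ℂ)*z ∈ closedBall (0:ℂ) b := smul_mem_closedBall ht.1 ht.2 hz
  have hd : dist ((s:ℂ)*z) ((t:ℂ)*z) < δ := by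
    rw [dist_eq_norm]
    have : (s:ℂ)*z - (t:ℂ)*z = ((s - t : ℝ):ℂ) * z := by push_cast; ring
    rw [this, norm_mul, Complex.norm_real, Real.norm_eq_abs]
    calc |s - t| * ‖z‖ ≤ |s - t| * 1 := by
          have := (mem_ball_zero_iff.mp hz).le
          exact mul_le_mul_of_nonneg_left this (abs_nonneg _)
      _ < δ := by simpa using hst
  exact (le_of_lt (by simpa [dist_eq_norm] using hδ' _ h1 _ h2 hd))


section Lpstuff
variable {p : ℝ}

local notation "μ₁" => (volume.restrict (ball (0:ℂ) 1))

instance : IsFiniteMeasure (volume.restrict (ball (0:ℂ) 1)) :=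
  ⟨by rw [Measure.restrict_apply_univ]; exact measure_ball_lt_top⟩

-- MemLp for scaled continuous functions
lemma memLp_scaled (hp : 1 ≤ p) {g : ℂ → ℂ} (hg : ContinuousOn g (ball (0:ℂ) 1))
    {t : ℝ} (ht0 : 0 ≤ t) (ht1 : t < 1) {h : ℂ → ℂ}
    (hbd : ∀ z ∈ ball (0:ℂ) 1, ‖h z‖ ≤ ‖g ((t:ℂ) * z)‖)
    (hm : ContinuousOn h (ball (0:ℂ) 1)) :
    MemLp h (ENNReal.ofReal p) μ₁ := by
  have hK : closedBall (0:ℂ) t ⊆ ball (0:ℂ) 1 := closedBall_subset_ball ht1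
  obtain ⟨M, hM⟩ := (isCompact_closedBall (0:ℂ) t).exists_bound_of_continuousOn (hg.mono hK)
  refine MemLp.of_bound (hm.aestronglyMeasurable measurableSet_ball) M ?_
  filter_upwards [ae_restrict_mem measurableSet_ball] with z hz
  exact (hbd z hz).trans (hM _ (smul_mem_closedBall ht0 le_rfl hz))

-- norm of an Lp function given sup bound
lemma norm_le_of_bound (hp : 1 ≤ p) (h : Lp ℂ (ENNReal.ofReal p) μ₁) {g : ℂ → ℂ} {ε : ℝ}
    (hε : 0 ≤ ε) (hae : (h : ℂ → ℂ) =ᵐ[μ₁] g) (hbd : ∀ z ∈ ball (0:ℂ) 1, ‖g z‖ ≤ ε) :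
    ‖h‖ ≤ ((volume (ball (0:ℂ) 1)) ^ p⁻¹).toReal * ε := by
  have hp0 : 0 < p := lt_of_lt_of_le one_pos hp
  have h1 : eLpNorm (h : ℂ → ℂ) (ENNReal.ofReal p) μ₁ = eLpNorm g _ μ₁ := eLpNorm_congr_ae hae
  have h2 : eLpNorm g (ENNReal.ofReal p) μ₁ ≤
      μ₁ Set.univ ^ (ENNReal.ofReal p).toReal⁻¹ * ENNReal.ofReal ε := by
    apply eLpNorm_le_of_ae_bound
    filter_upwards [ae_restrict_mem measurableSet_ball] with z hz using hbd z hz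
  rw [Lp.norm_def, h1]
  have h3 : μ₁ Set.univ = volume (ball (0:ℂ) 1) := Measure.restrict_apply_univ _
  have h4 : (ENNReal.ofReal p).toReal = p := ENNReal.toReal_ofReal hp0.le
  rw [h3, h4] at h2
  have hfin : volume (ball (0:ℂ) 1) ^ p⁻¹ * ENNReal.ofReal ε ≠ ⊤ := by
    apply ENNReal.mul_ne_top _ ENNReal.ofReal_ne_top
    exact ENNReal.rpow_ne_top_of_nonneg (by positivity) measure_ball_lt_top.ne
  calc (eLpNorm g (ENNReal.ofReal p) μ₁).toReal
      ≤ (volume (ball (0:ℂ) 1) ^ p⁻¹ * ENNReal.ofReal ε).toReal := ENNReal.toReal_mono hfin h2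
    _ = ((volume (ball (0:ℂ) 1)) ^ p⁻¹).toReal * ε := by
        rw [ENNReal.toReal_mul, ENNReal.toReal_ofReal hε]

end Lpstuff

lemma ofReal_p_ne_zero (hp : 1 ≤ p) : (ENNReal.ofReal p) ≠ 0 := by
  simp only [ne_eq, ENNReal.ofReal_eq_zero, not_le]; linarith

lemma norm_eq_rpow {p : ℝ} (hp : 1 ≤ p) (h : Lp ℂ (ENNReal.ofReal p) (volume.restrict (ball (0:ℂ) 1)))
    {g : ℂ → ℂ} (hae : (h : ℂ → ℂ) =ᵐ[volume.restrict (ball (0:ℂ) 1)] g) :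
    ‖h‖ = (∫ z in ball (0:ℂ) 1, ‖g z‖ ^ p) ^ (1/p) := by
  have hp0 : 0 < p := lt_of_lt_of_le one_pos hp
  have h4 : (ENNReal.ofReal p).toReal = p := ENNReal.toReal_ofReal hp0.le
  have hmem : MemLp g (ENNReal.ofReal p) (volume.restrict (ball (0:ℂ) 1)) :=
    (Lp.memLp h).ae_eq hae
  rw [Lp.norm_def, eLpNorm_congr_ae hae,
    hmem.eLpNorm_eq_integral_rpow_norm (ofReal_p_ne_zero hp) ENNReal.ofReal_ne_top,
    ENNReal.toReal_ofReal (by positivity)]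
  rw [h4, one_div]

lemma contOn_scaled {D : ℂ → ℂ} (hD : ContinuousOn D (ball (0:ℂ) 1)) {t : ℝ}
    (ht0 : 0 ≤ t) (ht1 : t ≤ 1) : ContinuousOn (fun z => D ((t:ℂ) * z)) (ball (0:ℂ) 1) :=
  hD.comp ((continuous_const.mul continuous_id).continuousOn)
    (fun _ hz => smul_mem_ball ht0 ht1 hz)

lemma norm_le_N {p : ℝ} (hp : 1 ≤ p)
    (h : Lp ℂ (ENNReal.ofReal p) (volume.restrict (ball (0:ℂ) 1)))
    {D : ℂ → ℂ} (hD : ContinuousOn D (ball (0:ℂ) 1)) {t : ℝ} (ht0 : 0 ≤ t) (ht1 : t < 1)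
    (hae : (h : ℂ → ℂ) =ᵐ[volume.restrict (ball (0:ℂ) 1)] fun z => z * D ((t:ℂ) * z)) :
    ‖h‖ ≤ (∫ z in ball (0:ℂ) 1, ‖D ((t:ℂ) * z)‖ ^ p) ^ (1/p) := by
  have hp0 : 0 < p := lt_of_lt_of_le one_pos hp
  have h4 : (ENNReal.ofReal p).toReal = p := ENNReal.toReal_ofReal hp0.le
  have hmemD : MemLp (fun z => D ((t:ℂ) * z)) (ENNReal.ofReal p) (volume.restrict (ball (0:ℂ) 1)) :=
    memLp_scaled hp hD ht0 ht1 (fun z _ => le_rfl) (contOn_scaled hD ht0 ht1.le)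
  have hmono : eLpNorm (h : ℂ → ℂ) (ENNReal.ofReal p) (volume.restrict (ball (0:ℂ) 1)) ≤
      eLpNorm (fun z => D ((t:ℂ) * z)) (ENNReal.ofReal p) (volume.restrict (ball (0:ℂ) 1)) := by
    rw [eLpNorm_congr_ae hae]
    apply eLpNorm_mono_ae
    filter_upwards [ae_restrict_mem measurableSet_ball] with z hz
    rw [norm_mul]
    have : ‖z‖ ≤ 1 := (mem_ball_zero_iff.mp hz).le
    nlinarith [norm_nonneg (D ((t:ℂ)*z)), norm_nonneg z]
  rw [Lp.norm_def]
  calc (eLpNorm (h : ℂ → ℂ) (ENNReal.ofReal p) (volume.restrict (ball (0:ℂ) 1))).toReal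
      ≤ (eLpNorm (fun z => D ((t:ℂ) * z)) (ENNReal.ofReal p) (volume.restrict (ball (0:ℂ) 1))).toReal := by
        apply ENNReal.toReal_mono _ hmono
        rw [hmemD.eLpNorm_eq_integral_rpow_norm (ofReal_p_ne_zero hp) ENNReal.ofReal_ne_top]
        exact ENNReal.ofReal_ne_top
    _ = (∫ z in ball (0:ℂ) 1, ‖D ((t:ℂ) * z)‖ ^ p) ^ (1/p) := by
        rw [hmemD.eLpNorm_eq_integral_rpow_norm (ofReal_p_ne_zero hp) ENNReal.ofReal_ne_top,
          ENNReal.toReal_ofReal (by positivity), h4, one_div]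

set_option maxHeartbeats 2000000 in
lemma key (p : ℝ) (hp : 1 ≤ p) (f : ℂ → ℂ) (hf : AnalyticOnNhd ℂ f (ball (0:ℂ) 1))
    (r : ℝ) (hr0 : 0 < r) (hr1 : r < 1)
    (hNint : IntervalIntegrable
      (fun t => (∫ z in ball (0:ℂ) 1, ‖deriv f ((t:ℂ)*z)‖ ^ p) ^ (1/p)) volume r 1) :
    bergmanNorm p (fun z => f ((r:ℂ)*z) - f z) ≤ ∫ s in r..(1:ℝ), Ap p (deriv f) s := by
  classical
  have hp0 : 0 < p := lt_of_lt_of_le one_pos hp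
  set N : ℝ → ℝ := fun t => (∫ z in ball (0:ℂ) 1, ‖deriv f ((t:ℂ)*z)‖ ^ p) ^ (1/p) with hN
  set μ₁ := volume.restrict (ball (0:ℂ) 1) with hμ₁
  set q : ENNReal := ENNReal.ofReal p with hq
  haveI : Fact (1 ≤ q) := ⟨by rw [hq]; exact ENNReal.one_le_ofReal.mpr hp⟩
  have hDc : ContinuousOn (deriv f) (ball (0:ℂ) 1) := hf.deriv.continuousOn
  have hfc : ContinuousOn f (ball (0:ℂ) 1) := hf.continuousOn
  set G : ℝ → ℂ → ℂ := fun t z => z * deriv f ((t:ℂ)*z) with hG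
  set Fc : ℝ → ℂ → ℂ := fun t z => f ((t:ℂ)*z) with hFc
  have hNnn : ∀ t, 0 ≤ N t := fun t => Real.rpow_nonneg
    (integral_nonneg fun z => Real.rpow_nonneg (norm_nonneg _) _) _
  have memF : ∀ t : ℝ, 0 ≤ t → t < 1 → MemLp (Fc t) q μ₁ := fun t ht0 ht1 =>
    memLp_scaled hp hfc ht0 ht1 (fun z _ => le_rfl) (contOn_scaled hfc ht0 ht1.le)
  have memG : ∀ t : ℝ, 0 ≤ t → t < 1 → MemLp (G t) q μ₁ := by
    intro t ht0 ht1
    refine memLp_scaled hp hDc ht0 ht1 (fun z hz => ?_) ?_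
    · rw [hG]; simp only [norm_mul]
      have : ‖z‖ ≤ 1 := (mem_ball_zero_iff.mp hz).le
      nlinarith [norm_nonneg (deriv f ((t:ℂ)*z)), norm_nonneg z]
    · exact continuousOn_id.mul (contOn_scaled hDc ht0 ht1.le)
  set Φ : ℝ → Lp ℂ q μ₁ := fun t => if h : MemLp (Fc t) q μ₁ then h.toLp _ else 0 with hΦdef
  set Ψ : ℝ → Lp ℂ q μ₁ := fun t => if h : MemLp (G t) q μ₁ then h.toLp _ else 0 with hΨdef
  have hΦ : ∀ t : ℝ, 0 ≤ t → t < 1 → (Φ t : ℂ → ℂ) =ᵐ[μ₁] Fc t := by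
    intro t ht0 ht1
    rw [hΦdef]; simp only [dif_pos (memF t ht0 ht1)]
    exact MemLp.coeFn_toLp _
  have hΨ : ∀ t : ℝ, 0 ≤ t → t < 1 → (Ψ t : ℂ → ℂ) =ᵐ[μ₁] G t := by
    intro t ht0 ht1
    rw [hΨdef]; simp only [dif_pos (memG t ht0 ht1)]
    exact MemLp.coeFn_toLp _
  set κ : ℝ := ((volume (ball (0:ℂ) 1)) ^ p⁻¹).toReal with hκdef
  have hκ : 0 ≤ κ := ENNReal.toReal_nonneg
  -- continuity of Ψ
  have diffΨ : ∀ (u t : ℝ), 0 ≤ u → u < 1 → 0 ≤ t → t < 1 → ∀ ε' ≥ (0:ℝ),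
      (∀ z ∈ ball (0:ℂ) 1, ‖deriv f ((u:ℂ)*z) - deriv f ((t:ℂ)*z)‖ ≤ ε') →
      ‖Ψ u - Ψ t‖ ≤ κ * ε' := by
    intro u t hu0 hu1 ht0 ht1 ε' hε' hbd
    refine norm_le_of_bound hp (Ψ u - Ψ t) (g := fun z => G u z - G t z) hε' ?_ (fun z hz => ?_)
    · filter_upwards [Lp.coeFn_sub (Ψ u) (Ψ t), hΨ u hu0 hu1, hΨ t ht0 ht1] with z h1 h2 h3
      rw [h1, Pi.sub_apply, h2, h3]
    · show ‖G u z - G t z‖ ≤ ε'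
      have : G u z - G t z = z * (deriv f ((u:ℂ)*z) - deriv f ((t:ℂ)*z)) := by
        rw [hG]; ring
      rw [this, norm_mul]
      have h1 : ‖z‖ ≤ 1 := (mem_ball_zero_iff.mp hz).le
      have h2 := hbd z hz
      nlinarith [norm_nonneg z, norm_nonneg (deriv f ((u:ℂ)*z) - deriv f ((t:ℂ)*z))]
  have contΨ : ∀ b : ℝ, 0 ≤ b → b < 1 → ContinuousOn Ψ (Icc 0 b) := by
    intro b hb0 hb1
    intro t ht
    rw [Metric.continuousWithinAt_iff]
    intro ε hε
    have hε' : 0 < ε / (2 * (κ + 1)) := by positivity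
    obtain ⟨δ, hδ, hδ'⟩ := ucont hDc hb0 hb1 hε'
    refine ⟨δ, hδ, fun u hu hud => ?_⟩
    have hb : ‖Ψ u - Ψ t‖ ≤ κ * (ε / (2 * (κ + 1))) := by
      refine diffΨ u t hu.1 (lt_of_le_of_lt hu.2 hb1) ht.1 (lt_of_le_of_lt ht.2 hb1)
        _ hε'.le (fun z hz => hδ' u t hu ht ?_ z hz)
      rwa [Real.dist_eq] at hud
    rw [dist_eq_norm]
    calc ‖Ψ u - Ψ t‖ ≤ κ * (ε / (2 * (κ + 1))) := hb
      _ = (κ / (2 * (κ + 1))) * ε := by ring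
      _ < 1 * ε := by
          refine mul_lt_mul_of_pos_right ?_ hε
          rw [div_lt_one (by positivity)]; linarith
      _ = ε := one_mul ε
  -- differentiability of Φ
  have derΦ : ∀ t : ℝ, 0 < t → t < 1 → HasDerivAt Φ (Ψ t) t := by
    intro t ht0 ht1
    rw [hasDerivAt_iff_tendsto_slope, Metric.tendsto_nhds]
    intro ε hε
    set b : ℝ := (t+1)/2 with hbdef
    have htb : t < b := by rw [hbdef]; linarith
    have hb0 : 0 ≤ b := by rw [hbdef]; linarith
    have hb1 : b < 1 := by rw [hbdef]; linarith
    have hε' : 0 < ε / (2 * (κ + 1)) := by positivity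
    set ε' : ℝ := ε / (2 * (κ + 1)) with hε'def
    obtain ⟨δ, hδ, hδ'⟩ := ucont hDc hb0 hb1 hε'
    set δ' : ℝ := min δ (min (b - t) t) with hδ'def
    have hδ'0 : 0 < δ' := lt_min hδ (lt_min (by linarith) ht0)
    have hev : ∀ᶠ u in 𝓝[≠] t, dist u t < δ' :=
      eventually_nhdsWithin_of_eventually_nhds
        (Metric.eventually_nhds_iff.mpr ⟨δ', hδ'0, fun y hy => hy⟩)
    filter_upwards [hev, eventually_mem_nhdsWithin] with u hud hune
    have hune' : u ≠ t := hune
    have habs : |u - t| < δ' := by rwa [Real.dist_eq] at hud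
    have hu0 : 0 < u := by
      have h1 : |u - t| < t := lt_of_lt_of_le habs (le_trans (min_le_right _ _) (min_le_right _ _))
      have := abs_lt.mp h1
      linarith [this.1]
    have hub : u < b := by
      have h1 : |u - t| < b - t := lt_of_lt_of_le habs (le_trans (min_le_right _ _) (min_le_left _ _))
      have := abs_lt.mp h1
      linarith [this.2]
    have hu1 : u < 1 := lt_trans hub hb1
    have htIcc : t ∈ Icc (0:ℝ) b := ⟨ht0.le, htb.le⟩
    have huIcc : u ∈ Icc (0:ℝ) b := ⟨hu0.le, hub.le⟩
    -- pointwise estimate on the slope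
    have hslope_pt : ∀ z ∈ ball (0:ℂ) 1,
        ‖(u - t)⁻¹ • (Fc u z - Fc t z) - G t z‖ ≤ ε' := by
      intro z hz
      set w : ℂ := G t z with hwdef
      have hsub : uIcc t u ⊆ Icc (0:ℝ) b := by
        exact Set.uIcc_subset_Icc htIcc huIcc
      have hder : ∀ s ∈ uIcc t u,
          HasDerivWithinAt (fun s' : ℝ => f (((s':ℝ):ℂ)*z) - s' • w) (G s z - w) (uIcc t u) s := by
        intro s hs
        have hsIcc : s ∈ Icc (0:ℝ) b := hsub hs
        have h1 : HasDerivAt (fun s' : ℝ => f (((s':ℝ):ℂ)*z)) (z * deriv f ((s:ℂ)*z)) s :=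
          pt_deriv hf hz (smul_mem_ball hsIcc.1 (le_of_lt (lt_of_le_of_lt hsIcc.2 hb1)) hz)
        have h2 : HasDerivAt (fun s' : ℝ => s' • w) ((1:ℝ) • w) s :=
          (hasDerivAt_id s).smul_const w
        have h3 := h1.sub h2
        simp only [one_smul] at h3
        exact h3.hasDerivWithinAt
      have hbd : ∀ s ∈ uIcc t u, ‖G s z - w‖ ≤ ε' := by
        intro s hs
        have hsIcc : s ∈ Icc (0:ℝ) b := hsub hs
        have h1 : |s - t| < δ := by
          calc |s - t| ≤ |u - t| := Set.abs_sub_left_of_mem_uIcc hs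
            _ < δ' := habs
            _ ≤ δ := min_le_left _ _
        have h2 := hδ' s t hsIcc htIcc h1 z hz
        have h3 : G s z - w = z * (deriv f ((s:ℂ)*z) - deriv f ((t:ℂ)*z)) := by
          rw [hwdef, hG]; ring
        rw [h3, norm_mul]
        have h4 : ‖z‖ ≤ 1 := (mem_ball_zero_iff.mp hz).le
        nlinarith [norm_nonneg z, norm_nonneg (deriv f ((s:ℂ)*z) - deriv f ((t:ℂ)*z))]
      have hmv := Convex.norm_image_sub_le_of_norm_hasDerivWithin_le hder hbd
        (convex_uIcc t u) Set.left_mem_uIcc Set.right_mem_uIcc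
      -- hmv : ‖(f(uz) - u•w) - (f(tz) - t•w)‖ ≤ ε' * ‖u - t‖
      have hrw : Fc u z - Fc t z - (u - t) • w = (f (((u:ℝ):ℂ)*z) - u • w) - (f (((t:ℝ):ℂ)*z) - t • w) := by
        rw [hFc]; simp only [sub_smul]; ring_nf
      have hne : u - t ≠ 0 := sub_ne_zero.mpr hune'
      have : (u - t)⁻¹ • (Fc u z - Fc t z) - G t z
          = (u - t)⁻¹ • (Fc u z - Fc t z - (u - t) • w) := by
        rw [hwdef, smul_sub ((u - t)⁻¹) (Fc u z - Fc t z) ((u - t) • (G t z)),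
          inv_smul_smul₀ hne]
      rw [this, norm_smul, hrw]
      calc ‖(u - t)⁻¹‖ * ‖(f (((u:ℝ):ℂ)*z) - u • w) - (f (((t:ℝ):ℂ)*z) - t • w)‖
          ≤ ‖(u - t)⁻¹‖ * (ε' * ‖u - t‖) := by
            exact mul_le_mul_of_nonneg_left hmv (norm_nonneg _)
        _ = ε' := by
            simp only [Real.norm_eq_abs, abs_inv]
            have h0 : |u - t| ≠ 0 := abs_ne_zero.mpr hne
            field_simp
      -- end pointwise
    have hslope : ‖slope Φ t u - Ψ t‖ ≤ κ * ε' := by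
      refine norm_le_of_bound hp (slope Φ t u - Ψ t)
        (g := fun z => (u - t)⁻¹ • (Fc u z - Fc t z) - G t z) hε'.le ?_ hslope_pt
      have hcs : ((slope Φ t u : Lp ℂ q μ₁) : ℂ → ℂ)
          =ᵐ[μ₁] fun z => (u - t)⁻¹ • (Fc u z - Fc t z) := by
        rw [slope_def_module]
        filter_upwards [Lp.coeFn_smul ((u - t)⁻¹ : ℝ) (Φ u - Φ t), Lp.coeFn_sub (Φ u) (Φ t),
          hΦ u hu0.le hu1, hΦ t ht0.le ht1] with z h1 h2 h3 h4
        rw [h1, Pi.smul_apply, h2, Pi.sub_apply, h3, h4]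
      filter_upwards [Lp.coeFn_sub (slope Φ t u) (Ψ t), hcs, hΨ t ht0.le ht1] with z h1 h2 h3
      rw [h1, Pi.sub_apply, h2, h3]
    rw [dist_eq_norm]
    calc ‖slope Φ t u - Ψ t‖ ≤ κ * ε' := hslope
      _ = (κ / (2 * (κ + 1))) * ε := by rw [hε'def]; ring
      _ < 1 * ε := by
          refine mul_lt_mul_of_pos_right ?_ hε
          rw [div_lt_one (by positivity)]; linarith
      _ = ε := one_mul ε
  -- norm of Ψ bounded by N
  have normΨ : ∀ t : ℝ, 0 ≤ t → t < 1 → ‖Ψ t‖ ≤ N t := fun t ht0 ht1 =>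
    norm_le_N hp (Ψ t) hDc ht0 ht1 (hΨ t ht0 ht1)
  -- segment estimate
  have key_seg : ∀ a c : ℝ, r ≤ a → a ≤ c → c < 1 → ‖Φ c - Φ a‖ ≤ ∫ t in a..c, N t := by
    intro a c hra hac hc1
    have ha0 : 0 < a := lt_of_lt_of_le hr0 hra
    have hc0 : 0 ≤ c := le_trans ha0.le hac
    have hcont : ContinuousOn Ψ (uIcc a c) := by
      apply (contΨ c hc0 hc1).mono
      rw [Set.uIcc_of_le hac]
      intro x hx; exact ⟨le_trans ha0.le hx.1, hx.2⟩
    have hftc : ∫ t in a..c, Ψ t = Φ c - Φ a := by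
      apply intervalIntegral.integral_eq_sub_of_hasDerivAt
      · intro t ht
        rw [Set.uIcc_of_le hac] at ht
        exact derΦ t (lt_of_lt_of_le ha0 ht.1) (lt_of_le_of_lt ht.2 hc1)
      · exact hcont.intervalIntegrable
    rw [← hftc]
    calc ‖∫ t in a..c, Ψ t‖ ≤ ∫ t in a..c, ‖Ψ t‖ :=
        intervalIntegral.norm_integral_le_integral_norm hac
      _ ≤ ∫ t in a..c, N t := by
        apply intervalIntegral.integral_mono_on hac hcont.norm.intervalIntegrable
          (hNint.mono_set ?_) ?_
        · rw [Set.uIcc_of_le hac, Set.uIcc_of_le hr1.le]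
          exact Set.Icc_subset_Icc hra hc1.le
        · intro x hx
          exact normΨ x (le_trans ha0.le hx.1) (lt_of_le_of_lt hx.2 hc1)
  -- limit construction
  obtain ⟨g, hg_bound, hg_ae⟩ :
      ∃ g : Lp ℂ q μ₁, ‖Φ r - g‖ ≤ (∫ t in r..(1:ℝ), N t) ∧ (g : ℂ → ℂ) =ᵐ[μ₁] f := by
    have h1r : 0 < 1 - r := by linarith
    set bseq : ℕ → ℝ := fun n => 1 - (1 - r)/(n+1) with hbseq
    have hb_r : ∀ n : ℕ, r ≤ bseq n := by
      intro n
      have h2 : (1 - r)/((n:ℝ)+1) ≤ (1 - r)/1 := by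
        apply div_le_div_of_nonneg_left h1r.le one_pos
        exact_mod_cast Nat.le_add_left 1 n
      rw [hbseq]; simp only []
      rw [div_one] at h2; linarith
    have hb_lt : ∀ n : ℕ, bseq n < 1 := by
      intro n
      have h2 : 0 < (1 - r)/((n:ℝ)+1) := by positivity
      rw [hbseq]; simp only []; linarith
    have hb_0 : ∀ n : ℕ, 0 ≤ bseq n := fun n => le_trans hr0.le (hb_r n)
    have hb_mono : Monotone bseq := by
      intro n m hnm
      rw [hbseq]; simp only []
      have h2 : (1 - r)/((m:ℝ)+1) ≤ (1 - r)/((n:ℝ)+1) := by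
        apply div_le_div_of_nonneg_left h1r.le (by positivity)
        exact_mod_cast Nat.add_le_add_right hnm 1
      linarith
    have hb_tend : Tendsto bseq atTop (𝓝 1) := by
      rw [hbseq]
      have h2 : Tendsto (fun n : ℕ => (1 - r)/((n:ℝ)+1)) atTop (𝓝 0) := by
        apply Tendsto.const_div_atTop
        exact tendsto_natCast_atTop_atTop.atTop_add tendsto_const_nhds
      have h3 := h2.const_sub 1
      simpa using h3
    set u : ℕ → ℝ := fun n => ∫ t in r..(bseq n), N t with hu
    have hIint : ∀ a c : ℝ, r ≤ a → a ≤ c → c ≤ 1 → IntervalIntegrable N volume a c := by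
      intro a c h1 h2 h3
      apply hNint.mono_set
      rw [Set.uIcc_of_le h2, Set.uIcc_of_le hr1.le]
      exact Set.Icc_subset_Icc h1 h3
    have husplit : ∀ n m : ℕ, n ≤ m → u m - u n = ∫ t in (bseq n)..(bseq m), N t := by
      intro n m hnm
      rw [hu]; simp only []
      rw [intervalIntegral.integral_interval_sub_left
        (hIint r (bseq m) le_rfl (hb_r m) (hb_lt m).le)
        (hIint r (bseq n) le_rfl (hb_r n) (hb_lt n).le)]
    have hu_mono : Monotone u := by
      intro n m hnm
      have h2 := husplit n m hnm
      have h3 : 0 ≤ ∫ t in (bseq n)..(bseq m), N t :=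
        intervalIntegral.integral_nonneg (hb_mono hnm) (fun x _ => hNnn x)
      linarith
    have hu_le : ∀ n, u n ≤ ∫ t in r..(1:ℝ), N t := by
      intro n
      have h2 : (∫ t in r..(1:ℝ), N t) - u n = ∫ t in (bseq n)..(1:ℝ), N t := by
        rw [hu]; simp only []
        rw [intervalIntegral.integral_interval_sub_left hNint
          (hIint r (bseq n) le_rfl (hb_r n) (hb_lt n).le)]
      have h3 : 0 ≤ ∫ t in (bseq n)..(1:ℝ), N t :=
        intervalIntegral.integral_nonneg (hb_lt n).le (fun x _ => hNnn x)
      linarith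
    have hu_cauchy : CauchySeq u :=
      (tendsto_atTop_ciSup hu_mono ⟨∫ t in r..(1:ℝ), N t,
        Set.forall_mem_range.mpr hu_le⟩).cauchySeq
    have hdist : ∀ n m : ℕ, dist (Φ (bseq m)) (Φ (bseq n)) ≤ dist (u m) (u n) := by
      have hbase : ∀ n m : ℕ, n ≤ m → dist (Φ (bseq m)) (Φ (bseq n)) ≤ dist (u m) (u n) := by
        intro n m hnm
        rw [dist_eq_norm, Real.dist_eq]
        calc ‖Φ (bseq m) - Φ (bseq n)‖ ≤ ∫ t in (bseq n)..(bseq m), N t :=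
            key_seg (bseq n) (bseq m) (hb_r n) (hb_mono hnm) (hb_lt m)
          _ = u m - u n := (husplit n m hnm).symm
          _ ≤ |u m - u n| := le_abs_self _
      intro n m
      rcases le_total n m with h | h
      · exact hbase n m h
      · rw [dist_comm, dist_comm (u m)]; exact hbase m n h
    have hΦ_cauchy : CauchySeq (fun n => Φ (bseq n)) := by
      rw [Metric.cauchySeq_iff]
      intro ε hε
      obtain ⟨M, hM⟩ := Metric.cauchySeq_iff.mp hu_cauchy ε hε
      exact ⟨M, fun m hm n hn => lt_of_le_of_lt (hdist n m) (hM m hm n hn)⟩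
    obtain ⟨g, hg⟩ := cauchySeq_tendsto_of_complete hΦ_cauchy
    refine ⟨g, ?_, ?_⟩
    · have h2 : Tendsto (fun n => ‖Φ r - Φ (bseq n)‖) atTop (𝓝 ‖Φ r - g‖) :=
        (Tendsto.sub tendsto_const_nhds hg).norm
      apply le_of_tendsto h2
      filter_upwards with n
      calc ‖Φ r - Φ (bseq n)‖ = ‖Φ (bseq n) - Φ r‖ := norm_sub_rev _ _
        _ ≤ ∫ t in r..(bseq n), N t := key_seg r (bseq n) le_rfl (hb_r n) (hb_lt n)
        _ ≤ ∫ t in r..(1:ℝ), N t := hu_le n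
    · -- identification of the limit
      have hq0' : q ≠ 0 := by rw [hq]; exact ofReal_p_ne_zero hp
      have hLp_conv : Tendsto (fun n => eLpNorm ((Φ (bseq n) : ℂ → ℂ) - (g : ℂ → ℂ)) q μ₁)
          atTop (𝓝 0) := by
        have h2 : ∀ n, eLpNorm ((Φ (bseq n) : ℂ → ℂ) - (g : ℂ → ℂ)) q μ₁
            = ENNReal.ofReal ‖Φ (bseq n) - g‖ := by
          intro n
          rw [← eLpNorm_congr_ae (Lp.coeFn_sub (Φ (bseq n)) g), Lp.norm_def,
            ENNReal.ofReal_toReal (Lp.eLpNorm_ne_top _)]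
        simp only [h2]
        have h3 : Tendsto (fun n => ‖Φ (bseq n) - g‖) atTop (𝓝 0) := by
          have h4 : Tendsto (fun n => Φ (bseq n) - g) atTop (𝓝 (g - g)) :=
            Tendsto.sub hg tendsto_const_nhds
          rw [sub_self] at h4
          simpa using h4.norm
        have h5 := (ENNReal.continuous_ofReal.tendsto 0).comp h3
        simpa [Function.comp_def] using h5
      have hTIM := tendstoInMeasure_of_tendsto_eLpNorm hq0'
        (fun n => Lp.aestronglyMeasurable (Φ (bseq n))) (Lp.aestronglyMeasurable g) hLp_conv
      obtain ⟨ns, hns_mono, hns_ae⟩ := hTIM.exists_seq_tendsto_ae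
      have hcoe : ∀ᵐ z ∂μ₁, ∀ n : ℕ, (Φ (bseq n) : ℂ → ℂ) z = Fc (bseq n) z :=
        ae_all_iff.mpr (fun n => hΦ (bseq n) (hb_0 n) (hb_lt n))
      filter_upwards [hns_ae, hcoe, ae_restrict_mem measurableSet_ball] with z h1 h2 h3
      have h4 : Tendsto (fun i => f ((bseq (ns i) : ℂ) * z)) atTop (𝓝 ((g : ℂ → ℂ) z)) := by
        apply h1.congr
        intro i
        rw [h2 (ns i), hFc]
      have h5 : Tendsto (fun i => f ((bseq (ns i) : ℂ) * z)) atTop (𝓝 (f z)) := by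
        have h6 : Tendsto (fun i => ((bseq (ns i) : ℝ) : ℂ) * z) atTop (𝓝 z) := by
          have h7 : Tendsto (fun i => bseq (ns i)) atTop (𝓝 1) :=
            hb_tend.comp hns_mono.tendsto_atTop
          have h8 := ((Complex.continuous_ofReal.tendsto 1).comp h7).mul_const z
          simpa using h8
        have hcf : ContinuousAt f z := (hf z h3).continuousAt
        exact hcf.tendsto.comp h6
      exact tendsto_nhds_unique h4 h5
  -- conclusion
  have hae : ((Φ r - g : Lp ℂ q μ₁) : ℂ → ℂ) =ᵐ[μ₁] fun z => f ((r:ℂ)*z) - f z := by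
    filter_upwards [Lp.coeFn_sub (Φ r) g, hΦ r hr0.le hr1, hg_ae] with z h1 h2 h3
    rw [h1, Pi.sub_apply, h2, h3, hFc]
  have hnorm : ‖Φ r - g‖ = (∫ z in ball (0:ℂ) 1, ‖f ((r:ℂ)*z) - f z‖ ^ p) ^ (1/p) :=
    norm_eq_rpow hp _ hae
  have hberg : bergmanNorm p (fun z => f ((r:ℂ)*z) - f z) = (π⁻¹)^(1/p) * ‖Φ r - g‖ := by
    rw [bergmanNorm, hnorm, Real.mul_rpow (by positivity)
      (integral_nonneg fun z => Real.rpow_nonneg (norm_nonneg _) _)]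
  have hAp : ∫ s in r..(1:ℝ), Ap p (deriv f) s = (π⁻¹)^(1/p) * ∫ t in r..(1:ℝ), N t := by
    rw [← intervalIntegral.integral_const_mul]
    apply intervalIntegral.integral_congr
    intro s _
    rw [Ap_eq]
  rw [hberg, hAp]
  exact mul_le_mul_of_nonneg_left hg_bound (by positivity)


set_option maxHeartbeats 1000000 in
lemma contAp (p : ℝ) (hp : 1 ≤ p) (f : ℂ → ℂ) (hf : AnalyticOnNhd ℂ f (ball (0:ℂ) 1)) :
    ContinuousOn (fun t => Ap p (deriv f) t) (Ico (0:ℝ) 1) := by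
  have hp0 : 0 < p := lt_of_lt_of_le one_pos hp
  have hDc : ContinuousOn (deriv f) (ball (0:ℂ) 1) := hf.deriv.continuousOn
  have contI : ContinuousOn (fun t : ℝ => ∫ z in ball (0:ℂ) 1, ‖deriv f ((t:ℂ)*z)‖ ^ p)
      (Ico (0:ℝ) 1) := by
    intro t₀ ht₀
    set b : ℝ := (t₀ + 1)/2 with hbdef
    have htb : t₀ < b := by rw [hbdef]; linarith [ht₀.2]
    have hb1 : b < 1 := by rw [hbdef]; linarith [ht₀.2]
    have hb0 : 0 ≤ b := by rw [hbdef]; linarith [ht₀.1]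
    have hK : closedBall (0:ℂ) b ⊆ ball (0:ℂ) 1 := closedBall_subset_ball hb1
    obtain ⟨M, hM⟩ := (isCompact_closedBall (0:ℂ) b).exists_bound_of_continuousOn (hDc.mono hK)
    have hM0 : 0 ≤ M := le_trans (norm_nonneg _) (hM 0 (mem_closedBall_self hb0))
    have hevset : ∀ᶠ x in 𝓝[Ico (0:ℝ) 1] t₀, x ∈ Ico (0:ℝ) 1 ∧ x < b := by
      filter_upwards [eventually_mem_nhdsWithin,
        eventually_nhdsWithin_of_eventually_nhds (eventually_lt_nhds htb)] with x h1 h2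
      exact ⟨h1, h2⟩
    apply continuousWithinAt_of_dominated (bound := fun _ => M ^ p)
    · filter_upwards [hevset] with x hx
      apply ContinuousOn.aestronglyMeasurable _ measurableSet_ball
      exact ((contOn_scaled hDc hx.1.1 hx.1.2.le).norm).rpow_const
        (fun z _ => Or.inr hp0.le)
    · filter_upwards [hevset] with x hx
      filter_upwards [ae_restrict_mem measurableSet_ball] with z hz
      have h1 : (x:ℂ) * z ∈ closedBall (0:ℂ) b := smul_mem_closedBall hx.1.1 hx.2.le hz
      have h2 : ‖deriv f ((x:ℂ)*z)‖ ≤ M := hM _ h1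
      rw [Real.norm_of_nonneg (Real.rpow_nonneg (norm_nonneg _) _)]
      exact Real.rpow_le_rpow (norm_nonneg _) h2 hp0.le
    · exact integrable_const _
    · filter_upwards [ae_restrict_mem measurableSet_ball] with z hz
      have h1 : ContinuousWithinAt (fun x : ℝ => deriv f ((x:ℂ)*z)) (Ico (0:ℝ) 1) t₀ := by
        apply ContinuousAt.continuousWithinAt
        have h2 : ContinuousAt (fun x : ℝ => ((x:ℝ):ℂ)*z) t₀ :=
          (Complex.continuous_ofReal.mul continuous_const).continuousAt
        have h3 : ContinuousAt (deriv f) ((t₀:ℂ)*z) :=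
          hDc.continuousAt (isOpen_ball.mem_nhds (smul_mem_ball ht₀.1 ht₀.2.le hz))
        exact h3.tendsto.comp h2
      exact (h1.norm).rpow_const (Or.inr hp0.le)
  have heq : ∀ t : ℝ, Ap p (deriv f) t
      = (π⁻¹)^(1/p) * (∫ z in ball (0:ℂ) 1, ‖deriv f ((t:ℂ)*z)‖ ^ p) ^ (1/p) :=
    fun t => Ap_eq p (deriv f) t
  apply ContinuousOn.congr _ (fun t _ => heq t)
  apply ContinuousOn.mul continuousOn_const
  exact contI.rpow_const (fun t _ => Or.inr (by positivity))


lemma domInt (α C r : ℝ) (hα : 0 < α) : IntervalIntegrable (fun s : ℝ => C * (1 - s) ^ (α - 1)) volume r 1 := by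
  have h1 : IntervalIntegrable (fun x : ℝ => x ^ (α - 1)) volume (1 - r) (1 - 1) :=
    intervalIntegral.intervalIntegrable_rpow' (by linarith)
  have h2 := h1.comp_sub_left 1
  norm_num at h2
  exact h2.const_mul C

lemma domVal (α C r : ℝ) (hα : 0 < α) :
    ∫ s in r..(1:ℝ), C * (1 - s) ^ (α - 1) = (C/α) * (1 - r) ^ α := by
  rw [intervalIntegral.integral_const_mul]
  have h1 : ∫ s in r..(1:ℝ), (1 - s) ^ (α - 1) = ∫ x in (1-(1:ℝ))..(1-r), x ^ (α - 1) :=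
    intervalIntegral.integral_comp_sub_left (fun x : ℝ => x ^ (α - 1)) 1
  rw [h1, integral_rpow (Or.inl (by linarith : (-1:ℝ) < α - 1))]
  rw [sub_add_cancel, sub_self, Real.zero_rpow (ne_of_gt hα)]
  field_simp
  ring

lemma Apint (p α : ℝ) (hp : 1 ≤ p) (hα : 0 < α) (f : ℂ → ℂ)
    (hf : AnalyticOnNhd ℂ f (ball (0:ℂ) 1)) (C : ℝ)
    (hC : ∀ s ∈ Ioo (0:ℝ) 1, Ap p (deriv f) s ≤ C * (1 - s) ^ (α - 1))
    (r : ℝ) (hr0 : 0 < r) (hr1 : r < 1) :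
    IntervalIntegrable (fun s => Ap p (deriv f) s) volume r 1 := by
  have hmeas : AEStronglyMeasurable (fun s => Ap p (deriv f) s)
      (volume.restrict (Set.uIoc r 1)) := by
    rw [Set.uIoc_of_le hr1.le]
    rw [show (volume.restrict (Set.Ioc r 1) : Measure ℝ) = volume.restrict (Set.Ioo r 1) from
      (Measure.restrict_congr_set Ioo_ae_eq_Ioc).symm]
    exact ((contAp p hp f hf).mono
      (fun x hx => ⟨le_trans hr0.le hx.1.le, hx.2⟩)).aestronglyMeasurable measurableSet_Ioo
  apply (domInt α C r hα).mono_fun hmeas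
  have h1 : ∀ᵐ s ∂(volume.restrict (Set.uIoc r 1)), s ∈ Set.uIoc r 1 :=
    ae_restrict_mem measurableSet_uIoc
  have h2 : ∀ᵐ s : ℝ ∂(volume.restrict (Set.uIoc r 1)), s ∉ ({1} : Set ℝ) :=
    ae_restrict_of_ae (measure_eq_zero_iff_ae_notMem.mp Real.volume_singleton)
  filter_upwards [h1, h2] with s hs hne
  rw [Set.uIoc_of_le hr1.le] at hs
  have hs' : s ∈ Ioo (0:ℝ) 1 :=
    ⟨lt_trans hr0 hs.1, lt_of_le_of_ne hs.2 (fun h => hne (by simp [h]))⟩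
  rw [Real.norm_of_nonneg (Ap_nonneg p (deriv f) s)]
  exact le_trans (hC s hs') (le_abs_self _)

theorem stmt16 (p α : ℝ) (hp : 1 ≤ p) (hα : 0 < α) (hα1 : α ≤ 1) (f : ℂ → ℂ)
    (hf : AnalyticOn ℂ f (ball (0 : ℂ) 1)) (C : ℝ)
    (hC : ∀ s ∈ Ioo (0 : ℝ) 1, Ap p (deriv f) s ≤ C * (1 - s) ^ (α - 1)) :
    (∀ r ∈ Ioo (0 : ℝ) 1,
      bergmanNorm p (fun z => f ((r : ℂ) * z) - f z) ≤ ∫ s in r..(1 : ℝ), Ap p (deriv f) s) ∧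
    (fun r : ℝ => ∫ s in r..(1 : ℝ), Ap p (deriv f) s)
      =O[𝓝[<] (1 : ℝ)] (fun r => (1 - r) ^ α) := by
  have hp0 : 0 < p := lt_of_lt_of_le one_pos hp
  have hfN : AnalyticOnNhd ℂ f (ball (0:ℂ) 1) := (isOpen_ball.analyticOn_iff_analyticOnNhd).mp hf
  constructor
  · intro r hr
    have hApint := Apint p α hp hα f hfN C hC r hr.1 hr.2
    have hc : ((π⁻¹:ℝ)^(1/p)) ≠ 0 := by positivity
    have h2 := hApint.const_mul (((π⁻¹:ℝ)^(1/p))⁻¹)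
    have h3 : (fun s => ((π⁻¹:ℝ)^(1/p))⁻¹ * Ap p (deriv f) s)
        = fun t : ℝ => (∫ z in ball (0:ℂ) 1, ‖deriv f ((t:ℂ)*z)‖ ^ p) ^ (1/p) := by
      funext s
      rw [Ap_eq, ← mul_assoc, inv_mul_cancel₀ hc, one_mul]
    rw [h3] at h2
    exact key p hp f hfN r hr.1 hr.2 h2
  · rw [Asymptotics.isBigO_iff]
    refine ⟨max (C/α) 0, ?_⟩
    have hev1 : ∀ᶠ r in 𝓝[<] (1:ℝ), 0 < r :=
      eventually_nhdsWithin_of_eventually_nhds (eventually_gt_nhds zero_lt_one)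
    filter_upwards [hev1, eventually_mem_nhdsWithin] with r hr0 hr1
    have hr1' : r < 1 := hr1
    have h1r : (0:ℝ) < 1 - r := by linarith
    have hApint := Apint p α hp hα f hfN C hC r hr0 hr1'
    have hnn : 0 ≤ ∫ s in r..(1:ℝ), Ap p (deriv f) s :=
      intervalIntegral.integral_nonneg hr1'.le (fun x _ => Ap_nonneg p (deriv f) x)
    have hmono : (∫ s in r..(1:ℝ), Ap p (deriv f) s)
        ≤ ∫ s in r..(1:ℝ), C * (1 - s) ^ (α - 1) := by
      apply intervalIntegral.integral_mono_ae_restrict hr1'.le hApint (domInt α C r hα)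
      have h1 : ∀ᵐ s ∂(volume.restrict (Set.Icc r 1)), s ∈ Set.Icc r 1 :=
        ae_restrict_mem measurableSet_Icc
      have h2 : ∀ᵐ s : ℝ ∂(volume.restrict (Set.Icc r 1)), s ∉ ({1} : Set ℝ) :=
        ae_restrict_of_ae (measure_eq_zero_iff_ae_notMem.mp Real.volume_singleton)
      filter_upwards [h1, h2] with s hs hne
      exact hC s ⟨lt_of_lt_of_le hr0 hs.1, lt_of_le_of_ne hs.2 (fun h => hne (by simp [h]))⟩
    rw [domVal α C r hα] at hmono
    rw [Real.norm_of_nonneg hnn, Real.norm_of_nonneg (Real.rpow_nonneg h1r.le α)]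
    calc (∫ s in r..(1:ℝ), Ap p (deriv f) s) ≤ (C/α) * (1-r)^α := hmono
      _ ≤ max (C/α) 0 * (1-r)^α :=
        mul_le_mul_of_nonneg_right (le_max_left _ _) (Real.rpow_nonneg h1r.le α)
end

section
/- Let f be in the Dirichlet space 𝒟 and w ∈ closed unit disc, and write f_w(z) = f(wz). Then ‖f_w - f‖_𝒟 ≤ |1-w| ‖f‖_𝒟 + ‖(f')_w - f'‖_{A²}, and for w ≠ 0, ‖(f')_w - f'‖_{A²} ≤ (|1-w|/|w|) ‖f‖_𝒟 + ‖f_w - f‖_𝒟. -/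
open Complex MeasureTheory Real Metric Set Filter Topology Asymptotics

open scoped ENNReal NNReal

/-- Auxiliary: the (unnormalized) `L²`-"norm" of `g` on the unit disc, in `ℝ≥0∞`. -/
noncomputable def eSq (g : ℂ → ℂ) : ℝ≥0∞ :=
  (∫⁻ z in ball (0 : ℂ) 1, ((‖g z‖₊ : ℝ≥0∞)) ^ (2 : ℝ)) ^ ((1 : ℝ) / 2)

lemma bergman_eq (g : ℂ → ℂ) (hg : Measurable g) :
    bergmanNorm 2 g = (π⁻¹) ^ ((1 : ℝ) / 2) * (eSq g).toReal := by
  unfold bergmanNorm eSq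
  rw [integral_eq_lintegral_of_nonneg_ae
      (Filter.Eventually.of_forall fun z => Real.rpow_nonneg (norm_nonneg _) _)
      (hg.norm.pow_const _).aestronglyMeasurable]
  have h1 : (∫⁻ z in ball (0 : ℂ) 1, ENNReal.ofReal (‖g z‖ ^ (2 : ℝ)))
      = ∫⁻ z in ball (0 : ℂ) 1, ((‖g z‖₊ : ℝ≥0∞)) ^ (2 : ℝ) := by
    refine lintegral_congr fun z => ?_
    rw [← enorm_eq_nnnorm, ← ofReal_norm_eq_enorm, ENNReal.ofReal_rpow_of_nonneg (norm_nonneg _) (by norm_num)]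
  rw [h1, Real.mul_rpow (by positivity) ENNReal.toReal_nonneg, ENNReal.toReal_rpow]

lemma bergman_nonneg (p : ℝ) (g : ℂ → ℂ) : 0 ≤ bergmanNorm p g :=
  Real.rpow_nonneg (mul_nonneg (inv_nonneg.2 pi_pos.le)
    (integral_nonneg fun z => Real.rpow_nonneg (norm_nonneg _) _)) _

lemma eSq_add_le {g h : ℂ → ℂ}
    (hg : AEMeasurable g (volume.restrict (ball (0 : ℂ) 1)))
    (hh : AEMeasurable h (volume.restrict (ball (0 : ℂ) 1))) :
    eSq (fun z => g z + h z) ≤ eSq g + eSq h := by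
  unfold eSq
  refine le_trans (ENNReal.rpow_le_rpow (lintegral_mono fun z => ?_) (by norm_num))
    (ENNReal.lintegral_Lp_add_le hg.enorm hh.enorm one_le_two)
  simp only [Pi.add_apply]
  exact ENNReal.rpow_le_rpow (by exact_mod_cast nnnorm_add_le (g z) (h z)) (by norm_num)

lemma eSq_neg (g : ℂ → ℂ) : eSq (fun z => -g z) = eSq g := by
  unfold eSq; simp

lemma eSq_sub_le {g h : ℂ → ℂ}
    (hg : AEMeasurable g (volume.restrict (ball (0 : ℂ) 1)))
    (hh : AEMeasurable h (volume.restrict (ball (0 : ℂ) 1))) :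
    eSq (fun z => g z - h z) ≤ eSq g + eSq h := by
  have h1 : (fun z => g z - h z) = fun z => g z + (-(h z)) := by funext z; ring
  rw [h1]
  exact le_trans (eSq_add_le hg hh.neg) (by rw [eSq_neg])

lemma eSq_smul (c : ℂ) (g : ℂ → ℂ) :
    eSq (fun z => c * g z) = (‖c‖₊ : ℝ≥0∞) * eSq g := by
  unfold eSq
  have h1 : ∀ z : ℂ, ((‖c * g z‖₊ : ℝ≥0∞)) ^ (2 : ℝ)
      = (‖c‖₊ : ℝ≥0∞) ^ (2 : ℝ) * ((‖g z‖₊ : ℝ≥0∞)) ^ (2 : ℝ) := fun z => by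
    rw [nnnorm_mul, ENNReal.coe_mul, ENNReal.mul_rpow_of_nonneg _ _ (by norm_num)]
  simp_rw [h1]
  rw [lintegral_const_mul' _ _ (ENNReal.rpow_ne_top_of_nonneg (by norm_num) ENNReal.coe_ne_top),
    ENNReal.mul_rpow_of_nonneg _ _ (by norm_num : (0:ℝ) ≤ 1/2), ← ENNReal.rpow_mul]
  norm_num

lemma eSq_comp_le {w : ℂ} (hw0 : w ≠ 0) (hw1 : ‖w‖ ≤ 1) {g : ℂ → ℂ} (hg : Measurable g) :
    eSq (fun z => g (w * z)) ≤ (‖w‖₊ : ℝ≥0∞)⁻¹ * eSq g := by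
  unfold eSq
  set F : ℂ → ℝ≥0∞ := fun y => ((‖g y‖₊ : ℝ≥0∞)) ^ (2 : ℝ) with hF
  have hFm : Measurable F := hg.enorm.pow_const _
  have hdet : LinearMap.det (Algebra.lmul ℝ ℂ w) = Complex.normSq w := by
    rw [← Algebra.norm_apply, Algebra.norm_complex_apply]
  have hdet0 : LinearMap.det (Algebra.lmul ℝ ℂ w) ≠ 0 := by
    rw [hdet]; exact_mod_cast (Complex.normSq_pos.2 hw0).ne'
  have hcoe : ⇑(Algebra.lmul ℝ ℂ w) = fun z : ℂ => w * z := by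
    funext z; simp
  have hmap : (volume : Measure ℂ).map (fun z : ℂ => w * z)
      = ENNReal.ofReal ((Complex.normSq w)⁻¹) • volume := by
    have h := Measure.map_linearMap_addHaar_eq_smul_addHaar (volume : Measure ℂ) hdet0
    rw [hcoe, hdet] at h
    rw [h, _root_.abs_of_nonneg (inv_nonneg.2 (Complex.normSq_nonneg w))]
  have hpre : (fun z : ℂ => w * z) ⁻¹' (ball (0 : ℂ) ‖w‖) = ball (0 : ℂ) 1 := by
    ext z
    simp only [Set.mem_preimage, mem_ball_zero_iff, norm_mul]
    exact mul_lt_iff_lt_one_right (norm_pos_iff.2 hw0)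
  have hres : (volume.restrict (ball (0 : ℂ) 1)).map (fun z : ℂ => w * z)
      = ENNReal.ofReal ((Complex.normSq w)⁻¹) • volume.restrict (ball (0 : ℂ) ‖w‖) := by
    rw [← hpre, ← Measure.restrict_map (measurable_const_mul w) measurableSet_ball, hmap,
      Measure.restrict_smul]
  have key : (∫⁻ z in ball (0 : ℂ) 1, F (w * z))
      ≤ ENNReal.ofReal ((Complex.normSq w)⁻¹) * ∫⁻ y in ball (0 : ℂ) 1, F y := by
    calc (∫⁻ z in ball (0 : ℂ) 1, F (w * z))
        = ∫⁻ y, F y ∂((volume.restrict (ball (0 : ℂ) 1)).map (fun z : ℂ => w * z)) :=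
          (lintegral_map hFm (measurable_const_mul w)).symm
      _ = ENNReal.ofReal ((Complex.normSq w)⁻¹) * ∫⁻ y in ball (0 : ℂ) ‖w‖, F y := by
          rw [hres, lintegral_smul_measure, smul_eq_mul]
      _ ≤ _ := mul_le_mul_right (lintegral_mono_set (ball_subset_ball hw1)) _
  have hcoef : (ENNReal.ofReal ((Complex.normSq w)⁻¹)) ^ ((1:ℝ)/2) = (‖w‖₊ : ℝ≥0∞)⁻¹ := by
    rw [Complex.normSq_eq_norm_sq]
    rw [ENNReal.ofReal_inv_of_pos (pow_pos (norm_pos_iff.2 hw0) 2), ENNReal.ofReal_pow (norm_nonneg w),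
      ofReal_norm_eq_enorm, enorm_eq_nnnorm, ENNReal.inv_rpow, ← ENNReal.rpow_natCast, ← ENNReal.rpow_mul]
    norm_num
  calc (∫⁻ z in ball (0 : ℂ) 1, F (w * z)) ^ ((1:ℝ)/2)
      ≤ (ENNReal.ofReal ((Complex.normSq w)⁻¹) * ∫⁻ y in ball (0 : ℂ) 1, F y) ^ ((1:ℝ)/2) :=
        ENNReal.rpow_le_rpow key (by norm_num)
    _ = (‖w‖₊ : ℝ≥0∞)⁻¹ * (∫⁻ y in ball (0 : ℂ) 1, F y) ^ ((1:ℝ)/2) := by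
        rw [ENNReal.mul_rpow_of_nonneg _ _ (by norm_num : (0:ℝ) ≤ 1/2), hcoef]

theorem stmt18 (f : ℂ → ℂ) (hf : MemD f) (w : ℂ) (hw : w ∈ closedBall (0 : ℂ) 1) :
    dirichletNorm (fun z => f (w * z) - f z) ≤
        ‖1 - w‖ * dirichletNorm f + bergmanNorm 2 (fun z => deriv f (w * z) - deriv f z) ∧
    (w ≠ 0 →
      bergmanNorm 2 (fun z => deriv f (w * z) - deriv f z) ≤
        (‖1 - w‖ / ‖w‖) * dirichletNorm f + dirichletNorm (fun z => f (w * z) - f z)) := by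
  have hw1 : ‖w‖ ≤ 1 := by simpa using mem_closedBall_zero_iff.1 hw
  set u := deriv f with hu
  have hum : Measurable u := measurable_deriv f
  have huwm : Measurable (fun z : ℂ => u (w * z)) := hum.comp (measurable_const_mul w)
  have hdiff : ∀ z ∈ ball (0 : ℂ) 1, DifferentiableAt ℂ f z := fun z hz =>
    ((hf.1 z hz).differentiableWithinAt).differentiableAt
      (mem_nhds_iff.2 ⟨ball 0 1, Set.subset_insert _ _, isOpen_ball, hz⟩)
  have hderiv : ∀ z ∈ ball (0 : ℂ) 1,
      deriv (fun z => f (w * z) - f z) z = w * u (w * z) - u z := by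
    intro z hz
    have hwz : w * z ∈ ball (0 : ℂ) 1 := by
      rw [mem_ball_zero_iff] at hz ⊢
      calc ‖w * z‖ = ‖w‖ * ‖z‖ := norm_mul _ _
        _ ≤ 1 * ‖z‖ := mul_le_mul_of_nonneg_right hw1 (norm_nonneg z)
        _ < 1 := by rwa [one_mul]
    have h1 : HasDerivAt f (u (w * z)) (w * z) := (hdiff _ hwz).hasDerivAt
    have h2 : HasDerivAt (fun z : ℂ => w * z) w z := by
      simpa using (hasDerivAt_id z).const_mul w
    have h3 : HasDerivAt (fun z : ℂ => f (w * z)) (u (w * z) * w) z := h1.comp z h2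
    have h4 : HasDerivAt f (u z) z := (hdiff _ hz).hasDerivAt
    rw [show (fun z => f (w * z) - f z) = (fun z => f (w * z)) - f from rfl, (h3.sub h4).deriv]; ring
  -- measurable pieces
  have hgm : Measurable (deriv fun z => f (w * z) - f z) := measurable_deriv _
  have humr : AEMeasurable u (volume.restrict (ball (0 : ℂ) 1)) := hum.aemeasurable
  have huwmr : AEMeasurable (fun z : ℂ => u (w * z)) (volume.restrict (ball (0 : ℂ) 1)) :=
    huwm.aemeasurable
  -- eSq of the derivative of the difference
  have heq : eSq (deriv fun z => f (w * z) - f z) = eSq (fun z => w * u (w * z) - u z) := by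
    unfold eSq
    congr 1
    refine setLIntegral_congr_fun measurableSet_ball (fun z hz => ?_)
    rw [hderiv z hz]
  -- finiteness
  have hLu : eSq u ≠ ∞ := by
    unfold eSq
    refine ENNReal.rpow_ne_top_of_nonneg (by norm_num) (ne_of_lt ?_)
    have h2 := hf.2.2.2
    rw [hasFiniteIntegral_iff_ofReal
      (Filter.Eventually.of_forall fun z => Real.rpow_nonneg (norm_nonneg _) _)] at h2
    refine lt_of_le_of_lt (le_of_eq (lintegral_congr fun z => ?_)) h2
    rw [← enorm_eq_nnnorm, ← ofReal_norm_eq_enorm, ENNReal.ofReal_rpow_of_nonneg (norm_nonneg _) (by norm_num)]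
  have hfin_uw : eSq (fun z : ℂ => u (w * z)) ≠ ∞ := by
    rcases eq_or_ne w 0 with h0 | h0
    · have : (fun z : ℂ => u (w * z)) = fun _ : ℂ => u 0 := by
        funext z; rw [h0, zero_mul]
      rw [this]
      unfold eSq
      refine ENNReal.rpow_ne_top_of_nonneg (by norm_num) ?_
      rw [lintegral_const]
      exact ENNReal.mul_ne_top (ENNReal.rpow_ne_top_of_nonneg (by norm_num) ENNReal.coe_ne_top)
        (by rw [Measure.restrict_apply_univ]; exact measure_ball_lt_top.ne)
    · exact ne_top_of_le_ne_top
        (ENNReal.mul_ne_top (ENNReal.inv_ne_top.2 (by simpa using h0)) hLu)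
        (eSq_comp_le h0 hw1 hum)
  have hfin_d : eSq (fun z : ℂ => u (w * z) - u z) ≠ ∞ :=
    ne_top_of_le_ne_top (ENNReal.add_ne_top.2 ⟨hfin_uw, hLu⟩) (eSq_sub_le huwmr humr)
  have hfin_w : eSq (fun z : ℂ => w * u (w * z) - u z) ≠ ∞ := by
    refine ne_top_of_le_ne_top (ENNReal.add_ne_top.2 ⟨?_, hLu⟩)
      (eSq_sub_le ((measurable_const.mul huwm).aemeasurable) humr)
    rw [eSq_smul]
    exact ENNReal.mul_ne_top ENNReal.coe_ne_top hfin_uw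
  -- key ENNReal inequalities
  have key1 : eSq (fun z => w * u (w * z) - u z)
      ≤ (‖1 - w‖₊ : ℝ≥0∞) * eSq u + eSq (fun z => u (w * z) - u z) := by
    have hpt : (fun z : ℂ => w * u (w * z) - u z)
        = fun z => (w * (u (w * z) - u z)) + ((w - 1) * u z) := by funext z; ring
    rw [hpt]
    refine le_trans (eSq_add_le ((measurable_const.mul (huwm.sub hum)).aemeasurable)
      ((measurable_const.mul hum).aemeasurable)) ?_
    rw [eSq_smul, eSq_smul]
    have hwc : (‖w‖₊ : ℝ≥0∞) ≤ 1 := by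
      rw [← ENNReal.coe_one, ENNReal.coe_le_coe]
      exact_mod_cast hw1
    have hrev : (‖w - 1‖₊ : ℝ≥0∞) = (‖1 - w‖₊ : ℝ≥0∞) := by
      rw [show w - 1 = -(1 - w) by ring, nnnorm_neg]
    rw [hrev]
    refine le_trans (add_le_add_left (mul_le_mul_left hwc _) _) ?_
    rw [one_mul, add_comm]
  have key2 : w ≠ 0 → eSq (fun z => u (w * z) - u z)
      ≤ ((‖1 - w‖₊ : ℝ≥0∞) * (‖w‖₊ : ℝ≥0∞)⁻¹) * eSq u
        + eSq (fun z => w * u (w * z) - u z) := by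
    intro hw0
    have hpt : (fun z : ℂ => u (w * z) - u z)
        = fun z => ((1 - w) * u (w * z)) + (w * u (w * z) - u z) := by funext z; ring
    rw [hpt]
    refine le_trans (eSq_add_le ((measurable_const.mul huwm).aemeasurable)
      (((measurable_const.mul huwm).sub hum).aemeasurable)) ?_
    refine add_le_add ?_ le_rfl
    rw [eSq_smul, mul_assoc]
    exact mul_le_mul_right (eSq_comp_le hw0 hw1 hum) _
  -- conversion to real norms
  set c := (π⁻¹ : ℝ) ^ ((1 : ℝ) / 2) with hc
  have hcpos : 0 < c := Real.rpow_pos_of_pos (inv_pos.2 pi_pos) _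
  have hdn : dirichletNorm (fun z => f (w * z) - f z)
      = c * (eSq (fun z => w * u (w * z) - u z)).toReal := by
    unfold dirichletNorm
    have h0 : (fun z => f (w * z) - f z) 0 = 0 := by simp
    rw [h0, norm_zero, bergman_eq _ hgm, heq]
    rw [← hc]
    have hnn : 0 ≤ c * (eSq (fun z => w * u (w * z) - u z)).toReal := by positivity
    rw [show (0:ℝ) ^ 2 = 0 by norm_num, zero_add, Real.sqrt_sq hnn]
  have hbd : bergmanNorm 2 (fun z => u (w * z) - u z)
      = c * (eSq (fun z => u (w * z) - u z)).toReal := bergman_eq _ (huwm.sub hum)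
  have hBu : bergmanNorm 2 u = c * (eSq u).toReal := bergman_eq _ hum
  have hdf : c * (eSq u).toReal ≤ dirichletNorm f := by
    rw [← hBu]
    unfold dirichletNorm
    rw [← hu]
    have h0 : 0 ≤ bergmanNorm 2 u := bergman_nonneg _ _
    have h1 : 0 ≤ ‖f 0‖ ^ 2 + bergmanNorm 2 u ^ 2 := by positivity
    nlinarith [Real.sq_sqrt h1, Real.sqrt_nonneg (‖f 0‖ ^ 2 + bergmanNorm 2 u ^ 2),
      sq_nonneg (‖f 0‖)]
  constructor
  · -- first inequality
    have treal : (eSq (fun z => w * u (w * z) - u z)).toReal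
        ≤ ‖1 - w‖ * (eSq u).toReal + (eSq (fun z => u (w * z) - u z)).toReal := by
      have h := ENNReal.toReal_mono
        (ENNReal.add_ne_top.2 ⟨ENNReal.mul_ne_top ENNReal.coe_ne_top hLu, hfin_d⟩) key1
      rwa [ENNReal.toReal_add (ENNReal.mul_ne_top ENNReal.coe_ne_top hLu) hfin_d,
        ENNReal.toReal_mul, ENNReal.coe_toReal, coe_nnnorm] at h
    rw [hdn, hbd]
    calc c * (eSq (fun z => w * u (w * z) - u z)).toReal
        ≤ c * (‖1 - w‖ * (eSq u).toReal + (eSq (fun z => u (w * z) - u z)).toReal) :=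
          mul_le_mul_of_nonneg_left treal hcpos.le
      _ = ‖1 - w‖ * (c * (eSq u).toReal) + c * (eSq (fun z => u (w * z) - u z)).toReal := by
          ring
      _ ≤ ‖1 - w‖ * dirichletNorm f + c * (eSq (fun z => u (w * z) - u z)).toReal :=
          add_le_add_left (mul_le_mul_of_nonneg_left hdf (norm_nonneg _)) _
  · -- second inequality
    intro hw0
    have hwc0 : (‖w‖₊ : ℝ≥0∞) ≠ 0 := by simpa using hw0
    have hcoefne : ((‖1 - w‖₊ : ℝ≥0∞) * (‖w‖₊ : ℝ≥0∞)⁻¹) ≠ ∞ :=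
      ENNReal.mul_ne_top ENNReal.coe_ne_top (ENNReal.inv_ne_top.2 hwc0)
    have treal : (eSq (fun z => u (w * z) - u z)).toReal
        ≤ (‖1 - w‖ / ‖w‖) * (eSq u).toReal
          + (eSq (fun z => w * u (w * z) - u z)).toReal := by
      have h := ENNReal.toReal_mono
        (ENNReal.add_ne_top.2 ⟨ENNReal.mul_ne_top hcoefne hLu, hfin_w⟩) (key2 hw0)
      rwa [ENNReal.toReal_add (ENNReal.mul_ne_top hcoefne hLu) hfin_w,
        ENNReal.toReal_mul, ENNReal.toReal_mul, ENNReal.toReal_inv,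
        ENNReal.coe_toReal, ENNReal.coe_toReal, coe_nnnorm, coe_nnnorm,
        ← div_eq_mul_inv] at h
    rw [hdn, hbd]
    calc c * (eSq (fun z => u (w * z) - u z)).toReal
        ≤ c * ((‖1 - w‖ / ‖w‖) * (eSq u).toReal
            + (eSq (fun z => w * u (w * z) - u z)).toReal) :=
          mul_le_mul_of_nonneg_left treal hcpos.le
      _ = (‖1 - w‖ / ‖w‖) * (c * (eSq u).toReal)
            + c * (eSq (fun z => w * u (w * z) - u z)).toReal := by ring
      _ ≤ (‖1 - w‖ / ‖w‖) * dirichletNorm f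
            + c * (eSq (fun z => w * u (w * z) - u z)).toReal :=
          add_le_add_left (mul_le_mul_of_nonneg_left hdf (by positivity)) _
end
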